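/- arXiv:2202.01567 — 14 statements merged into one kernel-verified Lean document; each statement's English description precedes it below -/
import Mathlib

section
/- For any perpetual trimming schedule of n bamboos with daily growth rates h_1,...,h_n summing to H, the supremum over time of the maximum bamboo height is at least H. That is, there is no schedule (cutting one bamboo per day, resetting its height to zero, all bamboos growing by h_i per day) keeping all bamboo heights strictly below H at all times. -/
/-- The day of the last cut of bamboo `i` strictly before day `t`
(`0` if it has never been cut). `S s` is the bamboo cut at the end of day `s`. -/
def lastCut {n : ℕ} (S : ℕ → Fin n) (i : Fin n) (t : ℕ) : ℕ :=
  ((Finset.range t).filter (fun s => S s = i)).sup id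

/-- Height of bamboo `i` (growth rate `h i` per day, starting from height `0`)
at time `t`, just before the cut performed at the end of day `t`. -/
noncomputable def bgtHeight {n : ℕ} (h : Fin n → ℝ) (S : ℕ → Fin n) (i : Fin n) (t : ℕ) : ℝ :=
  h i * ((t : ℝ) - (lastCut S i t : ℝ))

lemma lastCut_le {n : ℕ} (S : ℕ → Fin n) (i : Fin n) (t : ℕ) : lastCut S i t ≤ t := by
  apply Finset.sup_le
  intro b hb
  simp only [Finset.mem_filter, Finset.mem_range] at hb
  exact le_of_lt hb.1

lemma lastCut_succ {n : ℕ} (S : ℕ → Fin n) (i : Fin n) (t : ℕ) :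
    lastCut S i (t + 1) = if S t = i then t else lastCut S i t := by
  unfold lastCut
  rw [Finset.range_add_one, Finset.filter_insert]
  split
  · rw [Finset.sup_insert]
    exact max_eq_left (lastCut_le S i t)
  · rfl

lemma bgtHeight_succ {n : ℕ} (h : Fin n → ℝ) (S : ℕ → Fin n) (i : Fin n) (t : ℕ) :
    bgtHeight h S i (t + 1) =
      bgtHeight h S i t + h i - (if S t = i then bgtHeight h S i t else 0) := by
  unfold bgtHeight
  rw [lastCut_succ]
  split
  · push_cast; ring
  · push_cast; ring

lemma bgtHeight_eq_cast {n : ℕ} (h : Fin n → ℝ) (S : ℕ → Fin n) (i : Fin n) (t : ℕ) :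
    bgtHeight h S i t = h i * ((t - lastCut S i t : ℕ) : ℝ) := by
  unfold bgtHeight
  rw [Nat.cast_sub (lastCut_le S i t)]

/-- No schedule can keep all bamboo heights strictly below `H = ∑ h i` at all times. -/
theorem bgt_lower_bound_H (n : ℕ) (hn : 1 ≤ n) (h : Fin n → ℝ) (hpos : ∀ i, 0 < h i)
    (S : ℕ → Fin n) :
    ¬ (∀ (i : Fin n) (t : ℕ), bgtHeight h S i t < ∑ j, h j) := by
  intro hlt
  have hne : Nonempty (Fin n) := ⟨⟨0, hn⟩⟩
  set H : ℝ := ∑ j, h j with hH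
  set V : ℕ → ℝ := fun t => ∑ i, bgtHeight h S i t with hV
  -- step formula
  have hstep : ∀ t, V (t + 1) = V t + (H - bgtHeight h S (S t) t) := by
    intro t
    simp only [hV]
    have : (∑ i, bgtHeight h S i (t + 1)) =
        ∑ i, (bgtHeight h S i t + h i - (if S t = i then bgtHeight h S i t else 0)) :=
      Finset.sum_congr rfl fun i _ => bgtHeight_succ h S i t
    rw [this, Finset.sum_sub_distrib, Finset.sum_add_distrib,
      Finset.sum_ite_eq Finset.univ (S t) (fun i => bgtHeight h S i t)]
    simp [hH]
    ring
  have hmono : StrictMono V := by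
    apply strictMono_nat_of_lt_succ
    intro t
    rw [hstep t]
    have := hlt (S t) t
    linarith
  -- bound on ages
  obtain ⟨N, hN⟩ := exists_nat_ge (Finset.univ.sup' Finset.univ_nonempty (fun i => H / h i))
  have hbound : ∀ (i : Fin n) (t : ℕ), t - lastCut S i t ≤ N := by
    intro i t
    have h1 : h i * ((t - lastCut S i t : ℕ) : ℝ) < H := by
      rw [← bgtHeight_eq_cast]; exact hlt i t
    have h2 : ((t - lastCut S i t : ℕ) : ℝ) < H / h i := by
      rw [lt_div_iff₀ (hpos i)]; linarith [h1]
    have h3 : H / h i ≤ (N : ℝ) :=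
      le_trans (Finset.le_sup' (fun i => H / h i) (Finset.mem_univ i)) hN
    exact_mod_cast le_of_lt (lt_of_lt_of_le h2 h3)
  -- pigeonhole
  let f : ℕ → (Fin n → Fin (N + 1)) := fun t i => ⟨t - lastCut S i t, Nat.lt_succ_of_le (hbound i t)⟩
  obtain ⟨t1, t2, hne', heq⟩ := Finite.exists_ne_map_eq_of_infinite f
  have hVeq : V t1 = V t2 := by
    simp only [hV]
    apply Finset.sum_congr rfl
    intro i _
    rw [bgtHeight_eq_cast, bgtHeight_eq_cast]
    have : (f t1 i).val = (f t2 i).val := by rw [heq]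
    simp only [f] at this
    rw [this]
  rcases lt_or_gt_of_ne hne' with hlt' | hlt'
  · exact absurd hVeq (ne_of_lt (hmono hlt'))
  · exact absurd hVeq.symm (ne_of_lt (hmono hlt'))
end

section
/- For the discrete BGT instance with growth rates (7/15, 1/3, 1/5) (so H = 1), every schedule lets some bamboo reach height at least 4/3, and the periodic schedule repeating (1,2,1,2,1,3) keeps all bamboo heights at most 4/3. Hence the optimal maximum height for this instance equals 4/3 > H. -/
lemma le_lastCut {n : ℕ} (S : ℕ → Fin n) {i : Fin n} {s t : ℕ} (hst : s < t) (hS : S s = i) :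
    s ≤ lastCut S i t :=
  Finset.le_sup (f := id) (by simp [Finset.mem_filter, Finset.mem_range, hst, hS])

lemma lastCut_spec {n : ℕ} (S : ℕ → Fin n) {i : Fin n} {t : ℕ}
    (h : 1 ≤ lastCut S i t) : S (lastCut S i t) = i ∧ lastCut S i t < t := by
  by_cases hne : (((Finset.range t).filter (fun s => S s = i))).Nonempty
  · obtain ⟨b, hb, he⟩ := Finset.exists_mem_eq_sup _ hne id
    have hb' : lastCut S i t = b := he
    simp only [Finset.mem_filter, Finset.mem_range] at hb
    rw [hb']
    exact ⟨hb.2, hb.1⟩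
  · exfalso
    rw [Finset.not_nonempty_iff_eq_empty] at hne
    rw [lastCut, hne] at h
    simp at h

lemma gap_le {n : ℕ} (S : ℕ → Fin n) (i : Fin n) (t c : ℕ)
    (H : t ≤ c ∨ ∃ s, s < t ∧ t ≤ s + c ∧ S s = i) :
    (t : ℝ) - (lastCut S i t : ℝ) ≤ c := by
  rcases H with h | ⟨s, h1, h2, h3⟩
  · have h0 : (0:ℝ) ≤ (lastCut S i t : ℝ) := Nat.cast_nonneg _
    have ht : (t:ℝ) ≤ c := by exact_mod_cast h
    linarith
  · have hL : s ≤ lastCut S i t := le_lastCut S h1 h3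
    have hL' : (s:ℝ) ≤ (lastCut S i t : ℝ) := by exact_mod_cast hL
    have h2' : (t:ℝ) ≤ s + c := by exact_mod_cast h2
    linarith

lemma sched_eval (k : ℕ) (hk : k < 6) :
    (![2, 0, 1, 0, 1, 0] : Fin 6 → Fin 3) ⟨k, hk⟩ = [2, 0, 1, 0, 1, 0].getD k 0 := by
  interval_cases k <;> rfl

def mySched : ℕ → Fin 3 := fun t => ![2, 0, 1, 0, 1, 0] ⟨t % 6, Nat.mod_lt t (Nat.succ_pos 5)⟩

lemma mySched0 (s : ℕ) (h : s % 2 = 1) : mySched s = 0 := by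
  rw [mySched]
  rw [sched_eval]
  have h6 : s % 6 = 1 ∨ s % 6 = 3 ∨ s % 6 = 5 := by omega
  rcases h6 with h' | h' | h' <;> rw [h'] <;> rfl

lemma mySched1 (s : ℕ) (h : s % 6 = 2 ∨ s % 6 = 4) : mySched s = 1 := by
  rw [mySched, sched_eval]
  rcases h with h' | h' <;> rw [h'] <;> rfl

lemma mySched2 (s : ℕ) (h : s % 6 = 0) : mySched s = 2 := by
  rw [mySched, sched_eval, h]; rfl

lemma upper_bound : ∀ (i : Fin 3) (t : ℕ),
    bgtHeight ![7/15, 1/3, 1/5] mySched i t ≤ 4 / 3 := by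
  intro i t
  fin_cases i
  · -- bamboo 0, gap ≤ 2
    have hg : (t : ℝ) - (lastCut mySched 0 t : ℝ) ≤ (2 : ℕ) := by
      apply gap_le
      rcases le_or_gt t 2 with h | h
      · exact Or.inl h
      · right
        by_cases hp : t % 2 = 0
        · exact ⟨t - 1, by omega, by omega, mySched0 (t - 1) (by omega)⟩
        · exact ⟨t - 2, by omega, by omega, mySched0 (t - 2) (by omega)⟩
    show (7/15 : ℝ) * ((t : ℝ) - (lastCut mySched 0 t : ℝ)) ≤ 4 / 3
    push_cast at hg
    linarith
  · -- bamboo 1, gap ≤ 4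
    have hg : (t : ℝ) - (lastCut mySched 1 t : ℝ) ≤ (4 : ℕ) := by
      apply gap_le
      rcases le_or_gt t 4 with h | h
      · exact Or.inl h
      · right
        have h6 : t % 6 = 0 ∨ t % 6 = 1 ∨ t % 6 = 2 ∨ t % 6 = 3 ∨ t % 6 = 4 ∨ t % 6 = 5 := by
          omega
        rcases h6 with hr | hr | hr | hr | hr | hr
        · exact ⟨t - 2, by omega, by omega, mySched1 _ (by omega)⟩
        · exact ⟨t - 3, by omega, by omega, mySched1 _ (by omega)⟩
        · exact ⟨t - 4, by omega, by omega, mySched1 _ (by omega)⟩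
        · exact ⟨t - 1, by omega, by omega, mySched1 _ (by omega)⟩
        · exact ⟨t - 2, by omega, by omega, mySched1 _ (by omega)⟩
        · exact ⟨t - 1, by omega, by omega, mySched1 _ (by omega)⟩
    show (1/3 : ℝ) * ((t : ℝ) - (lastCut mySched 1 t : ℝ)) ≤ 4 / 3
    push_cast at hg
    linarith
  · -- bamboo 2, gap ≤ 6
    have hg : (t : ℝ) - (lastCut mySched 2 t : ℝ) ≤ (6 : ℕ) := by
      apply gap_le
      rcases le_or_gt t 6 with h | h
      · exact Or.inl h
      · right
        by_cases h0 : t % 6 = 0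
        · exact ⟨t - 6, by omega, by omega, mySched2 _ (by omega)⟩
        · exact ⟨t - t % 6, by omega, by omega, mySched2 _ (by omega)⟩
    show (1/5 : ℝ) * ((t : ℝ) - (lastCut mySched 2 t : ℝ)) ≤ 4 / 3
    push_cast at hg
    linarith

set_option synthInstance.maxSize 2000 in
set_option synthInstance.maxHeartbeats 1000000 in
set_option maxHeartbeats 1000000 in
lemma combo : ∀ x1 x2 x3 x4 x5 x6 x7 x8 : Fin 3,
    (x1 = 0 ∨ x2 = 0) → (x2 = 0 ∨ x3 = 0) → (x3 = 0 ∨ x4 = 0) → (x4 = 0 ∨ x5 = 0) →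
    (x5 = 0 ∨ x6 = 0) → (x6 = 0 ∨ x7 = 0) → (x7 = 0 ∨ x8 = 0) →
    (x1 = 1 ∨ x2 = 1 ∨ x3 = 1) → (x2 = 1 ∨ x3 = 1 ∨ x4 = 1) → (x3 = 1 ∨ x4 = 1 ∨ x5 = 1) →
    (x4 = 1 ∨ x5 = 1 ∨ x6 = 1) → (x5 = 1 ∨ x6 = 1 ∨ x7 = 1) → (x6 = 1 ∨ x7 = 1 ∨ x8 = 1) →
    (x1 = 2 ∨ x2 = 2 ∨ x3 = 2 ∨ x4 = 2 ∨ x5 = 2 ∨ x6 = 2) →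
    (x2 = 2 ∨ x3 = 2 ∨ x4 = 2 ∨ x5 = 2 ∨ x6 = 2 ∨ x7 = 2) →
    (x3 = 2 ∨ x4 = 2 ∨ x5 = 2 ∨ x6 = 2 ∨ x7 = 2 ∨ x8 = 2) → False := by decide

set_option maxHeartbeats 1600000 in
lemma lower_bound : ∀ S : ℕ → Fin 3, ∃ (i : Fin 3) (t : ℕ),
    (4 : ℝ) / 3 ≤ bgtHeight ![7/15, 1/3, 1/5] S i t := by
  intro S
  by_contra hcon
  push_neg at hcon
  have key : ∀ (i : Fin 3) (c : ℕ), (4:ℝ)/3 ≤ (c : ℝ) * ![7/15, 1/3, 1/5] i →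
      ∀ t, t < lastCut S i t + c := by
    intro i c hci t
    have h1 := hcon i t
    rw [bgtHeight] at h1
    have hpos : (0:ℝ) < (![7/15, 1/3, 1/5] : Fin 3 → ℝ) i := by
      fin_cases i <;> norm_num
    have h2 : (t:ℝ) - (lastCut S i t : ℝ) < c := by
      by_contra hge
      push_neg at hge
      nlinarith
    have h3 : (t:ℝ) < (lastCut S i t : ℝ) + c := by linarith
    exact_mod_cast h3
  have win : ∀ (i : Fin 3) (c a : ℕ), (∀ t, t < lastCut S i t + c) → 1 ≤ a → 1 ≤ c →
      ∃ s, a ≤ s ∧ s < a + (c - 1) ∧ S s = i := by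
    intro i c a hall ha hc
    have h1 := hall (a + c - 1)
    have hL : 1 ≤ lastCut S i (a + c - 1) := by omega
    obtain ⟨hSL, hlt⟩ := lastCut_spec S hL
    exact ⟨lastCut S i (a + c - 1), by omega, by omega, hSL⟩
  have k0 := key 0 3 (by norm_num [show (![7/15, 1/3, 1/5] : Fin 3 → ℝ) 0 = 7/15 from rfl])
  have k1 := key 1 4 (by norm_num [show (![7/15, 1/3, 1/5] : Fin 3 → ℝ) 1 = 1/3 from rfl])
  have k2 := key 2 7 (by norm_num [show (![7/15, 1/3, 1/5] : Fin 3 → ℝ) 2 = 1/5 from rfl])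
  have W0 : ∀ a, 1 ≤ a → S a = 0 ∨ S (a+1) = 0 := by
    intro a ha
    obtain ⟨s, h1, h2, h3⟩ := win 0 3 a k0 ha (by norm_num)
    have hs : s = a ∨ s = a + 1 := by omega
    rcases hs with rfl | rfl
    · exact Or.inl h3
    · exact Or.inr h3
  have W1 : ∀ a, 1 ≤ a → S a = 1 ∨ S (a+1) = 1 ∨ S (a+2) = 1 := by
    intro a ha
    obtain ⟨s, h1, h2, h3⟩ := win 1 4 a k1 ha (by norm_num)
    have hs : s = a ∨ s = a + 1 ∨ s = a + 2 := by omega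
    rcases hs with rfl | rfl | rfl
    · exact Or.inl h3
    · exact Or.inr (Or.inl h3)
    · exact Or.inr (Or.inr h3)
  have W2 : ∀ a, 1 ≤ a → S a = 2 ∨ S (a+1) = 2 ∨ S (a+2) = 2 ∨ S (a+3) = 2 ∨
      S (a+4) = 2 ∨ S (a+5) = 2 := by
    intro a ha
    obtain ⟨s, h1, h2, h3⟩ := win 2 7 a k2 ha (by norm_num)
    have hs : s = a ∨ s = a + 1 ∨ s = a + 2 ∨ s = a + 3 ∨ s = a + 4 ∨ s = a + 5 := by omega
    rcases hs with rfl | rfl | rfl | rfl | rfl | rfl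
    · exact Or.inl h3
    · exact Or.inr (Or.inl h3)
    · exact Or.inr (Or.inr (Or.inl h3))
    · exact Or.inr (Or.inr (Or.inr (Or.inl h3)))
    · exact Or.inr (Or.inr (Or.inr (Or.inr (Or.inl h3))))
    · exact Or.inr (Or.inr (Or.inr (Or.inr (Or.inr h3))))
  exact combo (S 1) (S 2) (S 3) (S 4) (S 5) (S 6) (S 7) (S 8)
    (W0 1 (by norm_num)) (W0 2 (by norm_num)) (W0 3 (by norm_num)) (W0 4 (by norm_num))
    (W0 5 (by norm_num)) (W0 6 (by norm_num)) (W0 7 (by norm_num))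
    (W1 1 (by norm_num)) (W1 2 (by norm_num)) (W1 3 (by norm_num)) (W1 4 (by norm_num))
    (W1 5 (by norm_num)) (W1 6 (by norm_num))
    (W2 1 (by norm_num)) (W2 2 (by norm_num)) (W2 3 (by norm_num))

/-- For the instance `(7/15, 1/3, 1/5)`: every schedule lets some bamboo reach height `≥ 4/3`;
the periodic schedule repeating `(b₁,b₂,b₁,b₂,b₁,b₃)` keeps all heights `≤ 4/3`;
hence the optimal maximum height equals `4/3`. -/
theorem bgt_715_13_15 :
    (∀ S : ℕ → Fin 3, ∃ (i : Fin 3) (t : ℕ),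
        (4 : ℝ) / 3 ≤ bgtHeight ![7/15, 1/3, 1/5] S i t) ∧
    (∀ (i : Fin 3) (t : ℕ),
        bgtHeight ![7/15, 1/3, 1/5]
          (fun t => ![2, 0, 1, 0, 1, 0] ⟨t % 6, by omega⟩) i t ≤ 4 / 3) ∧
    sInf {M : ℝ | ∃ S : ℕ → Fin 3,
        ∀ (i : Fin 3) (t : ℕ), bgtHeight ![7/15, 1/3, 1/5] S i t ≤ M} = 4 / 3 := by
  have P2 : ∀ (i : Fin 3) (t : ℕ),
      bgtHeight ![7/15, 1/3, 1/5]
        (fun t => ![2, 0, 1, 0, 1, 0] ⟨t % 6, by omega⟩) i t ≤ 4 / 3 :=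
    upper_bound
  refine ⟨lower_bound, P2, ?_⟩
  have hmem : (4:ℝ)/3 ∈ {M : ℝ | ∃ S : ℕ → Fin 3,
      ∀ (i : Fin 3) (t : ℕ), bgtHeight ![7/15, 1/3, 1/5] S i t ≤ M} :=
    ⟨mySched, upper_bound⟩
  have hlb : ∀ M ∈ {M : ℝ | ∃ S : ℕ → Fin 3,
      ∀ (i : Fin 3) (t : ℕ), bgtHeight ![7/15, 1/3, 1/5] S i t ≤ M}, (4:ℝ)/3 ≤ M := by
    rintro M ⟨S, hS⟩
    obtain ⟨i, t, hit⟩ := lower_bound S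
    exact le_trans hit (hS i t)
  exact le_antisymm (csInf_le ⟨4/3, hlb⟩ hmem) (le_csInf ⟨4/3, hmem⟩ hlb)
end

section
/- For the two-bamboo discrete BGT instance with growth rates h_1 = 1−ε and h_2 = ε, where 0 < ε ≤ 1/2, the optimal maximum height equals 2(1−ε). -/
/-- The alternating schedule. -/
def altS : ℕ → Fin 2 := fun t => ⟨t % 2, Nat.mod_lt _ (by norm_num)⟩

lemma altS_lastCut (i : Fin 2) (t : ℕ) : t ≤ lastCut altS i t + 2 := by
  by_cases ht : t < 2
  · omega
  · push_neg at ht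
    set s : ℕ := if (t - 1) % 2 = i.val then t - 1 else t - 2 with hsdef
    have hi : i.val < 2 := i.isLt
    have hs : s < t ∧ t ≤ s + 2 ∧ s % 2 = i.val := by
      rw [hsdef]; split <;> omega
    have hmem : s ∈ (Finset.range t).filter (fun s => altS s = i) := by
      simp only [Finset.mem_filter, Finset.mem_range]
      exact ⟨hs.1, by simp [altS, Fin.ext_iff, hs.2]⟩
    have := Finset.le_sup (f := id) hmem
    simp only [id] at this
    unfold lastCut
    omega

/-- For the two-bamboo instance `(1-ε, ε)` with `0 < ε ≤ 1/2`,
the optimal maximum height equals `2(1-ε)`. -/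
theorem bgt_two_bamboos_opt (ε : ℝ) (hε0 : 0 < ε) (hε : ε ≤ 1/2) :
    sInf {M : ℝ | ∃ S : ℕ → Fin 2,
        ∀ (i : Fin 2) (t : ℕ), bgtHeight ![1 - ε, ε] S i t ≤ M} = 2 * (1 - ε) := by
  have hmem : (2 * (1 - ε)) ∈ {M : ℝ | ∃ S : ℕ → Fin 2,
      ∀ (i : Fin 2) (t : ℕ), bgtHeight ![1 - ε, ε] S i t ≤ M} := by
    refine ⟨altS, fun i t => ?_⟩
    have hd : t ≤ lastCut altS i t + 2 := altS_lastCut i t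
    have hd' : (t : ℝ) - (lastCut altS i t : ℝ) ≤ 2 := by
      have : (t : ℝ) ≤ (lastCut altS i t : ℝ) + 2 := by exact_mod_cast hd
      linarith
    have hh : ![1 - ε, ε] i ≤ 1 - ε ∧ 0 ≤ ![1 - ε, ε] i := by
      fin_cases i <;> refine ⟨?_, ?_⟩ <;> simp <;> linarith
    unfold bgtHeight
    nlinarith [mul_le_mul_of_nonneg_left hd' hh.2, hh.1, hh.2]
  have hlb : ∀ M ∈ {M : ℝ | ∃ S : ℕ → Fin 2,
      ∀ (i : Fin 2) (t : ℕ), bgtHeight ![1 - ε, ε] S i t ≤ M}, 2 * (1 - ε) ≤ M := by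
    rintro M ⟨S, hS⟩
    by_contra hcon
    push_neg at hcon
    have hε1 : (0 : ℝ) < 1 - ε := by linarith
    -- bamboo 0 must be cut at every time s ≥ 1
    have h0 : ∀ s : ℕ, 1 ≤ s → S s = 0 := by
      intro s hs
      have h := hS 0 (s + 1)
      unfold bgtHeight at h
      simp only [Matrix.cons_val_zero] at h
      have hl : s ≤ lastCut S 0 (s + 1) := by
        by_contra hc
        push_neg at hc
        have : (lastCut S 0 (s + 1) : ℝ) ≤ (s : ℝ) - 1 := by
          have : lastCut S 0 (s + 1) + 1 ≤ s := hc
          have := (Nat.cast_le (α := ℝ)).mpr this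
          push_cast at this
          linarith
        have hdiff : (2 : ℝ) ≤ ((s + 1 : ℕ) : ℝ) - (lastCut S 0 (s + 1) : ℝ) := by
          push_cast
          linarith
        nlinarith
      have hpos : (⊥ : ℕ) < s := by show 0 < s; omega
      obtain ⟨b, hb, hsb⟩ := (Finset.le_sup_iff hpos).mp hl
      simp only [Finset.mem_filter, Finset.mem_range] at hb
      simp only [id] at hsb
      have : b = s := by omega
      rw [← this]
      exact hb.2
    -- bamboo 1 is never cut after time 0
    have h1 : ∀ t : ℕ, lastCut S 1 t = 0 := by
      intro t
      apply Nat.le_zero.mp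
      apply Finset.sup_le
      intro b hb
      simp only [Finset.mem_filter, Finset.mem_range] at hb
      rcases Nat.eq_zero_or_pos b with hb0 | hb1
      · simp [hb0]
      · exfalso
        have := h0 b hb1
        rw [this] at hb
        exact absurd hb.2 (by decide)
    -- bamboo 1 grows unboundedly
    obtain ⟨n, hn⟩ := exists_nat_gt (M / ε)
    have h := hS 1 n
    unfold bgtHeight at h
    simp only [Matrix.cons_val_one, Matrix.head_cons, Matrix.cons_val_zero, h1 n, Nat.cast_zero, sub_zero] at h
    have : M / ε < (n : ℝ) := hn
    have : M < ε * n := by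
      rw [div_lt_iff₀ hε0] at hn
      linarith [hn]
    linarith
  exact le_antisymm (csInf_le ⟨2 * (1 - ε), hlb⟩ hmem) (le_csInf ⟨_, hmem⟩ hlb)
end

section
/- If a Pinwheel instance ⟨f_1, f_2, ..., f_n⟩ of positive integer frequencies is feasible, then its density D = Σ_{i=1}^{n} 1/f_i is at most 1. -/
/-- `S` is a Pinwheel schedule for the frequencies `f`: every window of `f i`
consecutive days contains an occurrence of index `i`. -/
def PinSched {n : ℕ} (f : Fin n → ℕ) (S : ℕ → Fin n) : Prop :=
  ∀ (i : Fin n) (t : ℕ), ∃ s, t ≤ s ∧ s < t + f i ∧ S s = i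

/-- The Pinwheel instance `f` is feasible. -/
def PinFeasible {n : ℕ} (f : Fin n → ℕ) : Prop :=
  ∃ S : ℕ → Fin n, PinSched f S

lemma pinwheel_count {n : ℕ} (f : Fin n → ℕ) (hf : ∀ i, 2 ≤ f i)
    (S : ℕ → Fin n) (hS : PinSched f S) (T : ℕ) :
    ∑ i, T / f i ≤ T := by
  classical
  -- choose for each i and block j an occurrence
  have hch : ∀ (i : Fin n) (j : ℕ), ∃ s, j * f i ≤ s ∧ s < j * f i + f i ∧ S s = i :=
    fun i j => hS i (j * f i)
  choose g hg1 hg2 hg3 using hch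
  have hA : (Finset.univ.sigma (fun i : Fin n => Finset.range (T / f i))).card
      = ∑ i, T / f i := by
    simp [Finset.card_sigma]
  rw [← hA]
  have := Finset.card_le_card_of_injOn (f := fun p : Σ _ : Fin n, ℕ => g p.1 p.2)
    (s := Finset.univ.sigma (fun i : Fin n => Finset.range (T / f i)))
    (t := Finset.range T)
    (by
      rintro ⟨i, j⟩ hp
      simp only [Finset.mem_coe, Finset.mem_sigma, Finset.mem_range] at hp
      have hj : j + 1 ≤ T / f i := hp.2
      have h1 : g i j < (j + 1) * f i := by
        have := hg2 i j; nlinarith [hg2 i j]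
      have h2 : (j + 1) * f i ≤ (T / f i) * f i :=
        Nat.mul_le_mul_right _ hj
      have h3 : (T / f i) * f i ≤ T := Nat.div_mul_le_self _ _
      simp only [Finset.mem_coe, Finset.mem_range]
      omega)
    (by
      rintro ⟨i, j⟩ hp ⟨i', j'⟩ hq h
      simp only at h
      have hi : i = i' := by rw [← hg3 i j, ← hg3 i' j', h]
      subst hi
      have hfi : 0 < f i := by have := hf i; omega
      have e1 : g i j / f i = j :=
        Nat.div_eq_of_lt_le (hg1 i j) (by have := hg2 i j; simpa [Nat.succ_mul] using this)
      have e2 : g i j' / f i = j' :=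
        Nat.div_eq_of_lt_le (hg1 i j') (by have := hg2 i j'; simpa [Nat.succ_mul] using this)
      have : j = j' := by rw [← e1, h, e2]
      simp [this])
  simpa using this

/-- A feasible Pinwheel instance has density `∑ 1/fᵢ ≤ 1`. -/
theorem pinwheel_density_le_one (n : ℕ) (f : Fin n → ℕ) (hf : ∀ i, 2 ≤ f i)
    (hfeas : PinFeasible f) :
    ∑ i, (1 : ℝ) / (f i) ≤ 1 := by
  obtain ⟨S, hS⟩ := hfeas
  have key : ∀ T : ℕ, 0 < T → ∑ i, (1 : ℝ) / (f i) ≤ 1 + n / T := by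
    intro T hT
    have hc := pinwheel_count f hf S hS T
    have hTpos : (0 : ℝ) < T := by exact_mod_cast hT
    have step : ∀ i : Fin n, (T : ℝ) / f i ≤ (T / f i : ℕ) + 1 := by
      intro i
      have hfi : 0 < f i := by have := hf i; omega
      have hfiR : (0 : ℝ) < f i := by exact_mod_cast hfi
      rw [div_le_iff₀ hfiR]
      have hm := Nat.div_add_mod T (f i)
      have hlt := Nat.mod_lt T hfi
      have : T ≤ (T / f i + 1) * f i := by nlinarith
      exact_mod_cast this
    have sum_le : ∑ i, (T : ℝ) / f i ≤ (∑ i, (T / f i : ℕ) : ℕ) + n := by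
      push_cast
      calc ∑ i, (T : ℝ) / f i ≤ ∑ i : Fin n, ((T / f i : ℕ) + 1 : ℝ) :=
            Finset.sum_le_sum (fun i _ => step i)
        _ = (∑ i : Fin n, ((T / f i : ℕ) : ℝ)) + n := by
            rw [Finset.sum_add_distrib]; simp
    have hcR : ((∑ i, T / f i : ℕ) : ℝ) ≤ T := by exact_mod_cast hc
    have : ∑ i, (T : ℝ) / f i ≤ T + n := by linarith
    have h2 : ∑ i, (1 : ℝ) / f i = (∑ i, (T : ℝ) / f i) / T := by
      rw [Finset.sum_div]
      congr 1; funext i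
      rw [div_div, mul_comm, ← div_div, div_self hTpos.ne']
    rw [h2]
    rw [div_le_iff₀ hTpos]
    have : (1 + (n : ℝ) / T) * T = T + n := by field_simp
    linarith [this ▸ le_refl ((1 + (n : ℝ) / T) * T), ‹∑ i, (T : ℝ) / f i ≤ T + n›]
  -- take T → ∞
  by_contra h
  push_neg at h
  obtain ⟨T, hT⟩ := exists_nat_gt (max 0 ((n : ℝ) / (∑ i, (1 : ℝ) / f i - 1)))
  have hpos : (0 : ℝ) < ∑ i, (1 : ℝ) / f i - 1 := by linarith
  have hT0 : 0 < T := by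
    have : (0 : ℝ) < T := lt_of_le_of_lt (le_max_left _ _) hT
    exact_mod_cast this
  have hT : (n : ℝ) / (∑ i, (1 : ℝ) / f i - 1) < T :=
    lt_of_le_of_lt (le_max_right _ _) hT
  have := key T hT0
  have hTR : (0 : ℝ) < T := by exact_mod_cast hT0
  rw [div_lt_iff₀ hpos] at hT
  have : (n : ℝ) / T < ∑ i, (1 : ℝ) / f i - 1 := by
    rw [div_lt_iff₀ hTR]; linarith
  linarith
end

section
/- The Pinwheel instance ⟨2, 3, M⟩ is infeasible for every integer M ≥ 2. Consequently, there exist infeasible Pinwheel instances with density arbitrarily close to 5/6: the density 1/2 + 1/3 + 1/M tends to 5/6 as M → ∞. -/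
/-- The Pinwheel instance `⟨2,3,M⟩` is infeasible for every `M ≥ 2`, and its density
`1/2 + 1/3 + 1/M` tends to `5/6` as `M → ∞`, so there are infeasible instances with
density arbitrarily close to `5/6`. -/
theorem pinwheel_23M_infeasible :
    (∀ M : ℕ, 2 ≤ M → ¬ PinFeasible ![2, 3, M]) ∧
    Filter.Tendsto (fun M : ℕ => (1 : ℝ) / 2 + 1 / 3 + 1 / M)
      Filter.atTop (nhds (5 / 6)) := by
  constructor
  · rintro M hM ⟨S, hS⟩
    have h0 : ∀ t : ℕ, ∃ s, t ≤ s ∧ s < t + 2 ∧ S s = 0 := fun t => hS 0 t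
    have h1 : ∀ t : ℕ, ∃ s, t ≤ s ∧ s < t + 3 ∧ S s = 1 := fun t => hS 1 t
    -- index 2 appears at some position p ≥ 1
    obtain ⟨p, hp1, _, hp3⟩ := hS 2 1
    -- S (p+1) = 0
    obtain ⟨a, ha1, ha2, ha3⟩ := h0 p
    have hap : a = p ∨ a = p + 1 := by omega
    have hSp1 : S (p + 1) = 0 := by
      rcases hap with h | h
      · rw [h] at ha3; rw [ha3] at hp3; exact absurd hp3 (by decide)
      · rwa [h] at ha3
    -- S (p-1) = 1
    obtain ⟨b, hb1, hb2, hb3⟩ := h1 (p - 1)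
    have hbp : b = p - 1 ∨ b = p ∨ b = p + 1 := by omega
    have hSpm1 : S (p - 1) = 1 := by
      rcases hbp with h | h | h
      · rwa [h] at hb3
      · rw [h] at hb3; rw [hb3] at hp3; exact absurd hp3 (by decide)
      · rw [h] at hb3; rw [hb3] at hSp1; exact absurd hSp1 (by decide)
    -- but window {p-1, p} must contain 0: contradiction
    obtain ⟨c, hc1, hc2, hc3⟩ := h0 (p - 1)
    have hcp : c = p - 1 ∨ c = p := by omega
    rcases hcp with h | h
    · rw [h] at hc3; rw [hc3] at hSpm1; exact absurd hSpm1 (by decide)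
    · rw [h] at hc3; rw [hc3] at hp3; exact absurd hp3 (by decide)
  · have h : Filter.Tendsto (fun M : ℕ => (1 : ℝ) / M) Filter.atTop (nhds 0) :=
      tendsto_one_div_atTop_nhds_zero_nat
    have := (tendsto_const_nhds (x := (1 : ℝ) / 2 + 1 / 3)
      (f := Filter.atTop (α := ℕ))).add h
    have e : (5 : ℝ) / 6 = 1 / 2 + 1 / 3 + 0 := by norm_num
    rw [e]; exact this
end

section
/- Let V be a Pinwheel instance containing two equal even frequencies f_i = f_j = 2f, and let V' be the instance obtained by replacing these two frequencies by the single frequency f. If V' is feasible then V is feasible. (Replacement of the occurrences of frequency f alternately by i and j yields a valid schedule.) -/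
/-- Observation 1: if the instance `V'` (frequencies `f'`, whose last entry is `f`)
is feasible, then so is the instance `V` obtained by replacing this frequency `f`
by two copies of the frequency `2f`. -/
theorem pinwheel_split_pair (n f : ℕ) (hf : 1 ≤ f)
    (f' : Fin (n + 1) → ℕ) (hlast : f' (Fin.last n) = f)
    (hfeas : PinFeasible f') :
    PinFeasible (Fin.snoc (Fin.snoc (fun i : Fin n => f' i.castSucc) (2 * f)) (2 * f)) := by
  classical
  obtain ⟨S, hS⟩ := hfeas
  set L := Fin.last n with hL
  -- occurrence counter
  set c : ℕ → ℕ := fun s => ((Finset.range s).filter (fun t => S t = L)).card with hc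
  have hstep : ∀ s, S s = L → c (s + 1) = c s + 1 := by
    intro s hs
    simp [hc, Finset.range_add_one, Finset.filter_insert, hs]
  have hconst : ∀ a b, a ≤ b → (∀ u, a ≤ u → u < b → S u ≠ L) → c b = c a := by
    intro a b hab h
    simp only [hc]
    congr 1
    rw [Finset.range_eq_Ico,
      ← Finset.Ico_union_Ico_eq_Ico (Nat.zero_le a) hab, Finset.filter_union]
    have : Finset.filter (fun t => S t = L) (Finset.Ico a b) = ∅ := by
      rw [Finset.filter_eq_empty_iff]
      intro u hu
      rw [Finset.mem_Ico] at hu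
      exact h u hu.1 hu.2
    rw [this, Finset.union_empty, Finset.range_eq_Ico]
  -- key: in every window of length 2f there are two occurrences of L
  -- with consecutive counter values
  have key : ∀ t, ∃ s1 s2, t ≤ s1 ∧ s1 < s2 ∧ s2 < t + 2 * f ∧
      S s1 = L ∧ S s2 = L ∧ c s2 = c s1 + 1 := by
    intro t
    obtain ⟨s1, ht1, hlt1, hS1⟩ := hS L t
    rw [hlast] at hlt1
    have hex : ∃ m, S (s1 + 1 + m) = L := by
      obtain ⟨s', ht', hlt', hS'⟩ := hS L (s1 + 1)
      rw [hlast] at hlt'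
      exact ⟨s' - (s1 + 1), by rwa [Nat.add_sub_cancel' ht']⟩
    set m := Nat.find hex with hm
    refine ⟨s1, s1 + 1 + m, ht1, by omega, ?_, hS1, Nat.find_spec hex, ?_⟩
    · -- bound: m < f
      obtain ⟨s', ht', hlt', hS'⟩ := hS L (s1 + 1)
      rw [hlast] at hlt'
      have hmle : m ≤ s' - (s1 + 1) :=
        Nat.find_min' hex (by rwa [Nat.add_sub_cancel' ht'])
      omega
    · rw [hconst (s1 + 1) (s1 + 1 + m) (by omega) ?_, hstep s1 hS1]
      intro u hu1 hu2 hu3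
      have := Nat.find_min hex (m := u - (s1 + 1)) (by omega)
      rw [Nat.add_sub_cancel' hu1] at this
      exact this hu3
  -- the new schedule
  set T : ℕ → Fin (n + 2) := fun s =>
    if S s = L then
      (if c s % 2 = 0 then (Fin.last n).castSucc else Fin.last (n + 1))
    else (S s).castSucc with hT
  refine ⟨T, ?_⟩
  intro i t
  induction i using Fin.lastCases with
  | last =>
    obtain ⟨s1, s2, h1, h12, h2, hS1, hS2, hcc⟩ := key t
    rcases Nat.even_or_odd (c s1) with he | ho
    · refine ⟨s2, by omega, ?_, ?_⟩
      · simp [Fin.snoc_last]; omega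
      · simp [hT, hS2, hcc, Nat.add_mod, Nat.even_iff.mp he]
    · refine ⟨s1, h1, ?_, ?_⟩
      · simp [Fin.snoc_last]; omega
      · simp [hT, hS1, Nat.odd_iff.mp ho]
  | cast i =>
    induction i using Fin.lastCases with
    | last =>
      obtain ⟨s1, s2, h1, h12, h2, hS1, hS2, hcc⟩ := key t
      rcases Nat.even_or_odd (c s1) with he | ho
      · refine ⟨s1, h1, ?_, ?_⟩
        · simp [Fin.snoc_castSucc, Fin.snoc_last]; omega
        · simp [hT, hS1, Nat.even_iff.mp he]
      · refine ⟨s2, by omega, ?_, ?_⟩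
        · simp [Fin.snoc_castSucc, Fin.snoc_last]; omega
        · simp [hT, hS2, hcc, Nat.add_mod, Nat.odd_iff.mp ho]
    | cast i =>
      obtain ⟨s, hts, hlt, hSs⟩ := hS i.castSucc t
      refine ⟨s, hts, ?_, ?_⟩
      · simpa [Fin.snoc_castSucc] using hlt
      · have hne : (i.castSucc : Fin (n + 1)) ≠ L := by
          rw [hL]; exact Fin.ne_of_lt (Fin.castSucc_lt_last i)
        simp [hT, hSs, hne]
end

section
/- Let V be a Pinwheel instance containing m equal frequencies f_{i_1} = ... = f_{i_m} = m·f where f ≥ 2 is an integer, and let V' be obtained by replacing these m frequencies by the single frequency f. If V' is feasible then V is feasible: in a schedule for V', replacing the (im+q)-th occurrence of the new index by i_q (for each i ≥ 0, 1 ≤ q ≤ m) gives a feasible schedule for V. -/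
/-- Observation 2: if the instance `V'` (frequencies `f'`, whose last entry is `f ≥ 2`)
is feasible, then so is the instance `V` obtained by replacing this single frequency `f`
by `m` copies of the frequency `m·f`. -/
theorem pinwheel_split_m (n m f : ℕ) (hm : 1 ≤ m) (hf : 2 ≤ f)
    (f' : Fin (n + 1) → ℕ) (hlast : f' (Fin.last n) = f)
    (hfeas : PinFeasible f') :
    PinFeasible (fun i : Fin (n + m) =>
      if h : (i : ℕ) < n then f' ⟨(i : ℕ), by omega⟩ else m * f) := by
  classical
  obtain ⟨S, hS⟩ := hfeas
  -- count of occurrences of the last index before time t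
  set c : ℕ → ℕ := fun t => ((Finset.range t).filter (fun s => S s = Fin.last n)).card
    with hc
  have hcsucc : ∀ t, c (t + 1) = if S t = Fin.last n then c t + 1 else c t := by
    intro t
    simp only [hc, Finset.range_add_one, Finset.filter_insert]
    split
    · rw [Finset.card_insert_of_notMem (by simp)]
    · rfl
  have hfirst : ∀ t, ∃ s, t ≤ s ∧ s < t + f ∧ S s = Fin.last n ∧ c s = c t := by
    intro t
    obtain ⟨s₀, hs₀t, hs₀lt, hs₀⟩ := hS (Fin.last n) t
    rw [hlast] at hs₀lt
    have hex : ∃ s, t ≤ s ∧ S s = Fin.last n := ⟨s₀, hs₀t, hs₀⟩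
    obtain ⟨h1, h2⟩ := Nat.find_spec hex
    refine ⟨Nat.find hex, h1, ?_, h2, ?_⟩
    · have := Nat.find_min' hex ⟨hs₀t, hs₀⟩
      omega
    · have hset : (Finset.range (Nat.find hex)).filter (fun x => S x = Fin.last n)
          = (Finset.range t).filter (fun x => S x = Fin.last n) := by
        ext x
        simp only [Finset.mem_filter, Finset.mem_range]
        constructor
        · rintro ⟨hx, hPx⟩
          refine ⟨?_, hPx⟩
          by_contra hcon
          push_neg at hcon
          have := Nat.find_min' hex ⟨hcon, hPx⟩
          omega
        · rintro ⟨hx, hPx⟩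
          exact ⟨by omega, hPx⟩
      simp only [hc, hset]
  have key : ∀ (j t : ℕ), ∃ s, t ≤ s ∧ s < t + (j + 1) * f ∧ S s = Fin.last n ∧
      c s = c t + j := by
    intro j
    induction j with
    | zero =>
      intro t
      obtain ⟨s, h1, h2, h3, h4⟩ := hfirst t
      exact ⟨s, h1, by omega, h3, by omega⟩
    | succ j ih =>
      intro t
      obtain ⟨s₀, h1, h2, h3, h4⟩ := hfirst t
      obtain ⟨s, g1, g2, g3, g4⟩ := ih (s₀ + 1)
      have hc1 : c (s₀ + 1) = c s₀ + 1 := by rw [hcsucc]; simp [h3]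
      have hk : (j + 1 + 1) * f = (j + 1) * f + f := by ring
      exact ⟨s, by omega, by omega, g3, by omega⟩
  refine ⟨fun t => if h : (S t : ℕ) < n then ⟨(S t : ℕ), by omega⟩
      else ⟨n + c t % m, by have := Nat.mod_lt (c t) (show 0 < m by omega); omega⟩, ?_⟩
  intro i t
  by_cases hi : (i : ℕ) < n
  · obtain ⟨s, h1, h2, h3⟩ := hS ⟨(i : ℕ), by omega⟩ t
    refine ⟨s, h1, ?_, ?_⟩
    · simpa [hi] using h2
    · have hSn : (S s : ℕ) < n := by rw [h3]; exact hi
      simp only [hSn, dif_pos]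
      apply Fin.ext
      simp [h3]
  · set q := (i : ℕ) - n with hqdef
    have hq : q < m := by omega
    set r := c t % m with hrdef
    have hr : r < m := Nat.mod_lt _ (by omega)
    set j := if r ≤ q then q - r else q + m - r with hj
    have hjm : j < m := by rw [hj]; split <;> omega
    obtain ⟨s, h1, h2, h3, h4⟩ := key j t
    have hcs : c s % m = q := by
      have hct : c t = m * (c t / m) + r := (Nat.div_add_mod (c t) m).symm
      rw [h4, hct, add_assoc, Nat.mul_add_mod, hj]
      by_cases hcase : r ≤ q
      · rw [if_pos hcase]
        have heq : r + (q - r) = q := by omega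
        rw [heq, Nat.mod_eq_of_lt hq]
      · rw [if_neg hcase]
        have heq : r + (q + m - r) = q + m := by omega
        rw [heq, Nat.add_mod_right, Nat.mod_eq_of_lt hq]
    refine ⟨s, h1, ?_, ?_⟩
    · have hle : (j + 1) * f ≤ m * f := Nat.mul_le_mul_right f (by omega)
      simp only [hi, dif_neg, not_false_iff]
      omega
    · have hSnot : ¬ (S s : ℕ) < n := by rw [h3]; simp [Fin.last]
      simp only [hSnot, dif_neg, not_false_iff]
      apply Fin.ext
      simp [hcs]
      omega
end

section
/- For every discrete BGT instance I with growth rates h_1 ≥ ... ≥ h_n summing to H, the optimal maximum height satisfies OPT(I) ≤ 2H. More precisely, there exists a schedule in which bamboo b_i is cut at least once in every window of ⌊2H/h_i⌋' consecutive days, where the frequencies are powers of 2, keeping every bamboo height below 2H. -/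
-- card of residues in range
lemma card_filter_mod_le (a b r : ℕ) (hb : 0 < b) (hdvd : b ∣ a) :
    ((Finset.range a).filter (fun x => x % b = r)).card ≤ a / b := by
  classical
  have : ((Finset.range a).filter (fun x => x % b = r)).card ≤ (Finset.range (a / b)).card := by
    apply Finset.card_le_card_of_injOn (fun x => x / b)
    · intro x hx
      simp only [Finset.mem_coe, Finset.mem_filter, Finset.mem_range] at hx
      exact Finset.mem_range.mpr (Nat.div_lt_div_of_lt_of_dvd hdvd hx.1)
    · intro x hx y hy hxy
      simp only [Finset.mem_coe, Finset.mem_filter, Finset.mem_range] at hx hy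
      have hxy' : x / b = y / b := by simpa using hxy
      calc x = b * (x / b) + x % b := (Nat.div_add_mod x b).symm
        _ = b * (y / b) + y % b := by rw [hxy', hx.2, hy.2]
        _ = y := Nat.div_add_mod y b
  simpa using this

lemma exists_residues {n : ℕ} (g : Fin n → ℕ) (hpos : ∀ i, 0 < g i)
    (hdvd : ∀ j i : Fin n, j ≤ i → g j ∣ g i)
    (hsum : ∑ i, ((g i : ℝ))⁻¹ ≤ 1) :
    ∃ r : Fin n → ℕ, ∀ i : Fin n, r i < g i ∧ ∀ j, j < i → r i % g j ≠ r j := by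
  classical
  suffices H : ∀ m, m ≤ n → ∃ r : Fin n → ℕ,
      ∀ i : Fin n, i.val < m → (r i < g i ∧ ∀ j, j < i → r i % g j ≠ r j) by
    obtain ⟨r, hr⟩ := H n le_rfl
    exact ⟨r, fun i => hr i i.isLt⟩
  intro m
  induction m with
  | zero => exact fun _ => ⟨fun _ => 0, fun i hi => absurd hi (Nat.not_lt_zero _)⟩
  | succ m ih =>
    intro hm
    obtain ⟨r, hr⟩ := ih (Nat.le_of_succ_le hm)
    set i₀ : Fin n := ⟨m, hm⟩ with hi₀
    set T : Finset (Fin n) := Finset.univ.filter (fun j => j < i₀) with hT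
    set F : Finset ℕ := T.biUnion (fun j => (Finset.range (g i₀)).filter (fun x => x % g j = r j)) with hF
    have hFcard : F.card < g i₀ := by
      have h1 : F.card ≤ ∑ j ∈ T, (g i₀ / g j) := by
        refine le_trans (Finset.card_biUnion_le) ?_
        apply Finset.sum_le_sum
        intro j hj
        have hjlt : j < i₀ := by simpa [hT] using hj
        exact card_filter_mod_le _ _ _ (hpos j) (hdvd j i₀ (le_of_lt hjlt))
      have h2 : ((∑ j ∈ T, (g i₀ / g j) : ℕ) : ℝ) < g i₀ := by
        push_cast [Nat.cast_sum]
        have hsub : ∑ j ∈ insert i₀ T, ((g j : ℝ))⁻¹ ≤ 1 := by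
          refine le_trans (Finset.sum_le_sum_of_subset_of_nonneg (Finset.subset_univ _) ?_) hsum
          intro j _ _
          positivity
        have hi₀T : i₀ ∉ T := by simp [hT]
        rw [Finset.sum_insert hi₀T] at hsub
        have hgpos : (0:ℝ) < g i₀ := by exact_mod_cast hpos i₀
        have hcast : ∀ j ∈ T, ((g i₀ / g j : ℕ) : ℝ) = (g i₀ : ℝ) * ((g j : ℝ))⁻¹ := by
          intro j hj
          have hjlt : j < i₀ := by simpa [hT] using hj
          have : ((g i₀ / g j : ℕ) : ℝ) = (g i₀ : ℝ) / (g j : ℝ) :=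
            Nat.cast_div (hdvd j i₀ (le_of_lt hjlt)) (by exact_mod_cast (hpos j).ne')
          rw [this, div_eq_mul_inv]
        rw [Finset.sum_congr rfl hcast, ← Finset.mul_sum]
        have : (g i₀ : ℝ) * ∑ j ∈ T, ((g j:ℝ))⁻¹ ≤ (g i₀ : ℝ) * (1 - ((g i₀:ℝ))⁻¹) := by
          apply mul_le_mul_of_nonneg_left _ (le_of_lt hgpos)
          linarith
        calc (g i₀ : ℝ) * ∑ j ∈ T, ((g j:ℝ))⁻¹ ≤ (g i₀ : ℝ) * (1 - ((g i₀:ℝ))⁻¹) := this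
          _ = g i₀ - 1 := by field_simp
          _ < g i₀ := by linarith
      have h2' : (∑ j ∈ T, (g i₀ / g j)) < g i₀ := by exact_mod_cast h2
      omega
    have hne : (Finset.range (g i₀) \ F).Nonempty := by
      apply Finset.card_pos.mp
      have := Finset.le_card_sdiff F (Finset.range (g i₀))
      have hc : (Finset.range (g i₀)).card = g i₀ := Finset.card_range _
      omega
    obtain ⟨x, hx⟩ := hne
    rw [Finset.mem_sdiff, Finset.mem_range] at hx
    refine ⟨Function.update r i₀ x, ?_⟩
    intro i hi
    rcases Nat.lt_or_ge i.val m with hlt | hge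
    · have hne' : i ≠ i₀ := by intro hcon; rw [hcon] at hlt; simp [hi₀] at hlt
      rw [Function.update_of_ne hne']
      obtain ⟨h1, h2⟩ := hr i hlt
      refine ⟨h1, fun j hj => ?_⟩
      have : j ≠ i₀ := by
        intro hcon
        have : (j:ℕ) < i.val := hj
        rw [hcon] at this
        simp only [hi₀] at this
        omega
      rw [Function.update_of_ne this]
      exact h2 j hj
    · have : i = i₀ := by
        apply Fin.ext; simp [hi₀]; omega
      subst this
      rw [Function.update_self]
      refine ⟨hx.1, fun j hj => ?_⟩
      have hjne : j ≠ i₀ := ne_of_lt hj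
      rw [Function.update_of_ne hjne]
      intro hcon
      apply hx.2
      rw [hF, Finset.mem_biUnion]
      exact ⟨j, by simp [hT, hj], by simp [Finset.mem_filter, Finset.mem_range, hx.1, hcon]⟩

lemma exists_pinsched {n : ℕ} (hn : 1 ≤ n) (f : Fin n → ℕ)
    (hpow : ∀ i, ∃ k : ℕ, f i = 2 ^ k)
    (hsum : ∑ i, ((f i : ℝ))⁻¹ ≤ 1) :
    ∃ S : ℕ → Fin n, PinSched f S := by
  classical
  set σ : Equiv.Perm (Fin n) := Tuple.sort f with hσ
  set g : Fin n → ℕ := f ∘ σ with hg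
  have hgpow : ∀ i, ∃ k : ℕ, g i = 2 ^ k := fun i => hpow (σ i)
  have hgpos : ∀ i, 0 < g i := by
    intro i; obtain ⟨k, hk⟩ := hgpow i; rw [hk]; positivity
  have hgmono : Monotone g := Tuple.monotone_sort f
  have hgdvd : ∀ j i : Fin n, j ≤ i → g j ∣ g i := by
    intro j i hji
    obtain ⟨kj, hkj⟩ := hgpow j
    obtain ⟨ki, hki⟩ := hgpow i
    have : (2:ℕ) ^ kj ≤ 2 ^ ki := by rw [← hkj, ← hki]; exact hgmono hji
    have hk : kj ≤ ki := (Nat.pow_le_pow_iff_right (by norm_num)).mp this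
    rw [hkj, hki]
    exact pow_dvd_pow 2 hk
  have hgsum : ∑ i, ((g i : ℝ))⁻¹ ≤ 1 := by
    rw [hg]
    rw [← Equiv.sum_comp σ (fun i => ((f i : ℝ))⁻¹)] at hsum
    exact hsum
  obtain ⟨r, hr⟩ := exists_residues g hgpos hgdvd hgsum
  -- at most one index can match at each time
  have huniq : ∀ (t : ℕ) (i j : Fin n), t % g i = r i → t % g j = r j → i = j := by
    intro t i j hi hj
    rcases lt_trichotomy i j with hij | hij | hij
    · exfalso
      have hd := hgdvd i j (le_of_lt hij)
      have : t % g i = (t % g j) % g i := (Nat.mod_mod_of_dvd t hd).symm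
      rw [hj] at this
      exact (hr j).2 i hij (by rw [← this, hi])
    · exact hij
    · exfalso
      have hd := hgdvd j i (le_of_lt hij)
      have : t % g j = (t % g i) % g j := (Nat.mod_mod_of_dvd t hd).symm
      rw [hi] at this
      exact (hr i).2 j hij (by rw [← this, hj])
  set S' : ℕ → Fin n := fun t =>
    if h : ∃ i, t % g i = r i then h.choose else ⟨0, hn⟩ with hS'
  refine ⟨fun t => σ (S' t), ?_⟩
  intro i t
  set i' : Fin n := σ.symm i with hi'
  have hgi' : g i' = f i := by simp [hg, hi']
  have hgpos' : 0 < g i' := hgpos i'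
  set x : ℕ := g i' + r i' - t % g i' with hx
  set d : ℕ := x % g i' with hd
  have hdlt : d < g i' := Nat.mod_lt _ hgpos'
  have htb : t % g i' < g i' := Nat.mod_lt _ hgpos'
  have hrlt : r i' < g i' := (hr i').1
  have hmatch : (t + d) % g i' = r i' := by
    have e1 : (t + x % g i') % g i' = (t + x) % g i' :=
      Nat.ModEq.add_left t (Nat.mod_modEq x (g i'))
    have e2 : (t % g i' + x) % g i' = (t + x) % g i' :=
      Nat.ModEq.add_right x (Nat.mod_modEq t (g i'))
    have e3 : t % g i' + x = g i' + r i' :=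
      Nat.add_sub_cancel' (le_trans (le_of_lt htb) (Nat.le_add_right _ _))
    rw [hd, e1, ← e2, e3, Nat.add_mod_left, Nat.mod_eq_of_lt hrlt]
  refine ⟨t + d, Nat.le_add_right _ _, ?_, ?_⟩
  · rw [← hgi']; omega
  · have hex : ∃ j, (t + d) % g j = r j := ⟨i', hmatch⟩
    have hS'eq : S' (t + d) = hex.choose := by
      rw [hS']; simp only [dif_pos hex]
    have hspec : (t + d) % g hex.choose = r hex.choose := hex.choose_spec
    have : hex.choose = i' := huniq (t + d) hex.choose i' hspec hmatch
    show σ (S' (t + d)) = i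
    rw [hS'eq, this, hi', Equiv.apply_symm_apply]


/-- For any discrete BGT instance with total growth rate `H = ∑ h i`, there is a schedule
in which bamboo `bᵢ` is cut in every window of `fᵢ` consecutive days, where the `fᵢ` are
powers of `2` with `fᵢ·hᵢ ≤ 2H`; consequently every bamboo's height stays at most `2H`,
so `OPT ≤ 2H`. -/
theorem bgt_opt_le_two_H (n : ℕ) (hn : 1 ≤ n) (h : Fin n → ℝ) (hpos : ∀ i, 0 < h i) :
    ∃ (S : ℕ → Fin n) (f : Fin n → ℕ),
      (∀ i, ∃ k : ℕ, f i = 2 ^ k) ∧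
      (∀ i, (f i : ℝ) * h i ≤ 2 * ∑ j, h j) ∧
      PinSched f S ∧
      (∀ (i : Fin n) (t : ℕ), bgtHeight h S i t ≤ 2 * ∑ j, h j) := by
  classical
  set H : ℝ := ∑ j, h j with hH
  have hne : (Finset.univ : Finset (Fin n)).Nonempty := by
    refine ⟨⟨0, hn⟩, Finset.mem_univ _⟩
  have hHpos : 0 < H := Finset.sum_pos (fun i _ => hpos i) hne
  have hhle : ∀ i, h i ≤ H := by
    intro i
    exact Finset.single_le_sum (fun j _ => le_of_lt (hpos j)) (Finset.mem_univ i)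
  set f : Fin n → ℕ := fun i => 2 ^ (Nat.log 2 ⌊2 * H / h i⌋₊) with hf
  have hx2 : ∀ i, (2:ℝ) ≤ 2 * H / h i := by
    intro i
    rw [le_div_iff₀ (hpos i)]
    nlinarith [hhle i, hpos i]
  have hm2 : ∀ i, 2 ≤ ⌊2 * H / h i⌋₊ := by
    intro i
    exact Nat.le_floor (by exact_mod_cast hx2 i)
  have hpow : ∀ i, ∃ k : ℕ, f i = 2 ^ k := fun i => ⟨_, rfl⟩
  have hfle : ∀ i, (f i : ℝ) ≤ 2 * H / h i := by
    intro i
    have h1 : f i ≤ ⌊2 * H / h i⌋₊ := Nat.pow_log_le_self 2 (by have := hm2 i; omega)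
    calc (f i : ℝ) ≤ (⌊2 * H / h i⌋₊ : ℝ) := by exact_mod_cast h1
      _ ≤ 2 * H / h i := Nat.floor_le (by have := hx2 i; linarith)
  have hflt : ∀ i, 2 * H / h i < 2 * f i := by
    intro i
    have h1 : ⌊2 * H / h i⌋₊ < 2 ^ (Nat.log 2 ⌊2 * H / h i⌋₊ + 1) :=
      Nat.lt_pow_succ_log_self (by norm_num) _
    have h2 : (⌊2 * H / h i⌋₊ : ℝ) + 1 ≤ 2 * f i := by
      rw [hf]
      push_cast
      rw [pow_succ] at h1
      exact_mod_cast Nat.succ_le_of_lt (by linarith [h1] )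
    calc 2 * H / h i < ⌊2 * H / h i⌋₊ + 1 := Nat.lt_floor_add_one _
      _ ≤ 2 * f i := h2
  have hfmul : ∀ i, (f i : ℝ) * h i ≤ 2 * H := by
    intro i
    have := (le_div_iff₀ (hpos i)).mp (hfle i)
    linarith
  have hfpos : ∀ i, (0:ℝ) < f i := by intro i; rw [hf]; positivity
  have hsum : ∑ i, ((f i : ℝ))⁻¹ ≤ 1 := by
    have hlt : ∀ i ∈ Finset.univ, ((f i : ℝ))⁻¹ < h i / H := by
      intro i _
      have h1 : H / h i < f i := by
        have := hflt i
        rw [div_lt_iff₀ (hpos i)] at this ⊢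
        linarith
      have h2 : (0:ℝ) < H / h i := div_pos hHpos (hpos i)
      have := (inv_strictAnti₀ h2 h1)
      rwa [inv_div] at this
    have hlt2 := Finset.sum_lt_sum_of_nonempty hne hlt
    have hsum2 : ∑ i, h i / H = 1 := by
      rw [← Finset.sum_div, ← hH, div_self (ne_of_gt hHpos)]
    linarith
  obtain ⟨S, hS⟩ := exists_pinsched hn f hpow hsum
  refine ⟨S, f, hpow, hfmul, hS, ?_⟩
  intro i t
  have hfpos' : 0 < f i := by rw [hf]; positivity
  have hkey : (t : ℝ) - (lastCut S i t : ℝ) ≤ f i := by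
    rcases Nat.lt_or_ge t (f i) with hlt | hge
    · have h0 : (0:ℝ) ≤ (lastCut S i t : ℝ) := Nat.cast_nonneg _
      have : (t:ℝ) < f i := by exact_mod_cast hlt
      linarith
    · obtain ⟨s, hs1, hs2, hs3⟩ := hS i (t - f i)
      have hst : s < t := by omega
      have hmem : s ∈ (Finset.range t).filter (fun u => S u = i) := by
        simp [Finset.mem_filter, Finset.mem_range, hst, hs3]
      have hle : s ≤ lastCut S i t := Finset.le_sup (f := id) hmem
      have h1 : t - f i ≤ lastCut S i t := le_trans hs1 hle
      have h2 : ((t - f i : ℕ) : ℝ) = (t:ℝ) - f i := by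
        push_cast [Nat.cast_sub hge]
        ring
      have h3 : ((t - f i : ℕ) : ℝ) ≤ (lastCut S i t : ℝ) := by exact_mod_cast h1
      rw [h2] at h3
      linarith
  unfold bgtHeight
  calc h i * ((t : ℝ) - (lastCut S i t : ℝ)) ≤ h i * f i :=
        mul_le_mul_of_nonneg_left hkey (le_of_lt (hpos i))
    _ = (f i : ℝ) * h i := mul_comm _ _
    _ ≤ 2 * H := hfmul i
end

section
/- Let I be an instance of discrete BGT with growth rates h_i and total H, let δ > 0, and let ⟨f_1,...,f_n⟩ be a feasible Pinwheel instance with f_i ≤ (1+δ)H/h_i for all i. Then any feasible Pinwheel schedule for ⟨f_1,...,f_n⟩, used as a BGT schedule for I, keeps every bamboo's height at most (1+δ)H at all times; hence it is a (1+δ)·(H/OPT(I)) ≤ (1+δ)-approximation schedule. -/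
/-- Lemma (reduction from Pinwheel): if `f` is a Pinwheel instance with
`fᵢ ≤ (1+δ)H/hᵢ` and `S` is a feasible Pinwheel schedule for `f`, then used as a BGT
schedule it keeps every bamboo's height at most `(1+δ)H`; moreover no schedule keeps
all heights below `H`, so `S` is a `(1+δ)`-approximation schedule. -/
theorem bgt_pinwheel_reduction (n : ℕ) (hn : 1 ≤ n) (h : Fin n → ℝ) (hpos : ∀ i, 0 < h i)
    (δ : ℝ) (hδ : 0 < δ) (f : Fin n → ℕ) (hf1 : ∀ i, 1 ≤ f i)
    (hfle : ∀ i, (f i : ℝ) ≤ (1 + δ) * (∑ j, h j) / h i)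
    (S : ℕ → Fin n) (hS : PinSched f S) :
    (∀ (i : Fin n) (t : ℕ), bgtHeight h S i t ≤ (1 + δ) * ∑ j, h j) ∧
    (∀ S' : ℕ → Fin n, ¬ (∀ (i : Fin n) (t : ℕ), bgtHeight h S' i t < ∑ j, h j)) := by
  have hne : Nonempty (Fin n) := ⟨⟨0, hn⟩⟩
  set H : ℝ := ∑ j, h j with hH
  have hHpos : 0 < H := Finset.sum_pos (fun i _ => hpos i) Finset.univ_nonempty
  constructor
  · -- Part 1
    intro i t
    have hgap : (t : ℝ) - (lastCut S i t : ℝ) ≤ f i := by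
      rcases le_or_gt t (f i) with hle | hlt
      · have h1 : (0:ℝ) ≤ (lastCut S i t : ℝ) := Nat.cast_nonneg _
        have h2 : (t : ℝ) ≤ f i := Nat.cast_le.2 hle
        linarith
      · obtain ⟨s, hs1, hs2, hs3⟩ := hS i (t - f i)
        have hfi : f i ≤ t := hlt.le
        rw [Nat.sub_add_cancel hfi] at hs2
        have hmemf : s ∈ (Finset.range t).filter (fun s => S s = i) := by
          simp only [Finset.mem_filter, Finset.mem_range]
          exact ⟨hs2, hs3⟩
        have hle2 : t - f i ≤ lastCut S i t :=
          le_trans hs1 (Finset.le_sup (f := id) hmemf)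
        have := (Nat.cast_le (α := ℝ)).2 hle2
        rw [Nat.cast_sub hfi] at this
        linarith
    show h i * ((t : ℝ) - (lastCut S i t : ℝ)) ≤ (1 + δ) * H
    calc h i * ((t : ℝ) - (lastCut S i t : ℝ)) ≤ h i * f i :=
          mul_le_mul_of_nonneg_left hgap (hpos i).le
      _ ≤ h i * ((1 + δ) * H / h i) := mul_le_mul_of_nonneg_left (hfle i) (hpos i).le
      _ = (1 + δ) * H := by rw [mul_comm, div_mul_cancel₀ _ (hpos i).ne']
  · -- Part 2
    intro S' hlt
    simp only [bgtHeight] at hlt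
    set g : Fin n → ℕ := fun i => ⌈H / h i⌉₊ - 1 with hg
    have hgdef : ∀ i, g i = ⌈H / h i⌉₊ - 1 := fun i => rfl
    have hceilpos : ∀ i, 0 < ⌈H / h i⌉₊ := fun i =>
      Nat.ceil_pos.2 (div_pos hHpos (hpos i))
    have hgap : ∀ (i : Fin n) (t : ℕ), t - lastCut S' i t ≤ g i := by
      intro i t
      have h1 := hlt i t
      have h2 := lastCut_le S' i t
      have h3 : ((t - lastCut S' i t : ℕ) : ℝ) < H / h i := by
        rw [Nat.cast_sub h2, lt_div_iff₀ (hpos i), mul_comm]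
        exact h1
      have h4 : t - lastCut S' i t < ⌈H / h i⌉₊ := Nat.lt_ceil.2 h3
      have h5 := hceilpos i
      have h6 := hgdef i
      omega
    have hgpos : ∀ i, 1 ≤ g i := by
      intro i
      have h1 := hgap i 1
      have h0 : lastCut S' i 1 = 0 := by
        have : lastCut S' i 1 ≤ 0 := by
          apply Finset.sup_le
          intro s hs
          exact Nat.lt_succ_iff.mp (Finset.mem_range.1 (Finset.mem_filter.1 hs).1)
        omega
      omega
    have hglt : ∀ i, (g i : ℝ) < H / h i := by
      intro i
      apply Nat.lt_ceil.1
      have h5 := hceilpos i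
      have h6 := hgdef i
      omega
    -- a cut in every window
    have hmem : ∀ (i : Fin n) (t : ℕ), g i < t →
        t - g i ≤ lastCut S' i t ∧ lastCut S' i t < t ∧ S' (lastCut S' i t) = i := by
      intro i t ht
      have h1 := hgap i t
      have h2 := lastCut_le S' i t
      have hge : t - g i ≤ lastCut S' i t := by omega
      have hposL : 0 < lastCut S' i t := by omega
      have hnef : ((Finset.range t).filter (fun s => S' s = i)).Nonempty := by
        by_contra hcon
        rw [Finset.not_nonempty_iff_eq_empty] at hcon
        have : lastCut S' i t = 0 := by rw [lastCut, hcon]; rfl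
        omega
      obtain ⟨s, hs, hsup⟩ := Finset.exists_mem_eq_sup _ hnef id
      rw [Finset.mem_filter, Finset.mem_range] at hs
      have heq : lastCut S' i t = s := hsup
      exact ⟨hge, by rw [heq]; exact hs.1, by rw [heq]; exact hs.2⟩
    -- counting cuts
    have hcard : ∀ (i : Fin n) (T : ℕ),
        T / g i - 1 ≤ ((Finset.range T).filter (fun s => S' s = i)).card := by
      intro i T
      set K := T / g i - 1 with hK
      rcases Nat.eq_zero_or_pos K with h0 | hKpos
      · omega
      have hgi := hgpos i
      have hKT : (K + 1) * g i ≤ T := by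
        have h1 : K + 1 ≤ T / g i := by omega
        calc (K + 1) * g i ≤ (T / g i) * g i := Nat.mul_le_mul_right _ h1
          _ ≤ T := Nat.div_mul_le_self T (g i)
      have key : ∀ k < K,
          (k + 1) * g i ≤ lastCut S' i ((k + 2) * g i) ∧
          lastCut S' i ((k + 2) * g i) < (k + 2) * g i ∧
          S' (lastCut S' i ((k + 2) * g i)) = i := by
        intro k hk
        have hlt2 : g i < (k + 2) * g i := by nlinarith
        obtain ⟨a, b, c⟩ := hmem i ((k + 2) * g i) hlt2
        refine ⟨?_, b, c⟩
        have he : (k + 2) * g i - g i = (k + 1) * g i := by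
          have : (k + 2) * g i = (k + 1) * g i + g i := by ring
          omega
        omega
      have hinj := Finset.card_le_card_of_injOn
        (f := fun k => lastCut S' i ((k + 2) * g i))
        (s := Finset.range K) (t := (Finset.range T).filter (fun s => S' s = i))
        (by
          intro k hk
          rw [Finset.coe_range, Set.mem_Iio] at hk
          obtain ⟨a, b, c⟩ := key k hk
          rw [Finset.mem_coe, Finset.mem_filter, Finset.mem_range]
          refine ⟨lt_of_lt_of_le b ?_, c⟩
          calc (k + 2) * g i ≤ (K + 1) * g i := Nat.mul_le_mul_right _ (by omega)
            _ ≤ T := hKT)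
        (by
          intro a ha b hb hab
          rw [Finset.coe_range, Set.mem_Iio] at ha hb
          by_contra hne2
          rcases lt_or_gt_of_ne hne2 with hlt3 | hlt3
          · obtain ⟨a1, a2, _⟩ := key a ha
            obtain ⟨b1, b2, _⟩ := key b hb
            have : (a + 2) * g i ≤ (b + 1) * g i := Nat.mul_le_mul_right _ (by omega)
            simp only [] at hab
            omega
          · obtain ⟨a1, a2, _⟩ := key a ha
            obtain ⟨b1, b2, _⟩ := key b hb
            have : (b + 2) * g i ≤ (a + 1) * g i := Nat.mul_le_mul_right _ (by omega)
            simp only [] at hab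
            omega)
      rw [Finset.card_range] at hinj
      exact hinj
    -- density sum
    set q : ℝ := ∑ i, (1 : ℝ) / g i with hq
    have hgr : ∀ i, (0:ℝ) < (g i : ℝ) := by
      intro i
      exact_mod_cast hgpos i
    have hq1 : 1 < q := by
      have hstep : ∀ i ∈ Finset.univ, h i / H < 1 / (g i : ℝ) := by
        intro i _
        rw [div_lt_div_iff₀ hHpos (hgr i)]
        have := hglt i
        rw [lt_div_iff₀ (hpos i)] at this
        nlinarith
      have h1 : (1:ℝ) = ∑ i, h i / H := by
        rw [← Finset.sum_div]
        field_simp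
        exact hH
      rw [h1, hq]
      exact Finset.sum_lt_sum_of_nonempty Finset.univ_nonempty hstep
    -- choose T
    set T : ℕ := ⌈(2 * n : ℝ) / (q - 1)⌉₊ + 1 with hT
    have hTgt : (2 * n : ℝ) < (T : ℝ) * (q - 1) := by
      have h1 : (2 * n : ℝ) / (q - 1) ≤ ⌈(2 * n : ℝ) / (q - 1)⌉₊ := Nat.le_ceil _
      have h2 : (⌈(2 * n : ℝ) / (q - 1)⌉₊ : ℝ) < T := by
        rw [hT]; push_cast; linarith
      have hq0 : (0:ℝ) < q - 1 := by linarith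
      have := (div_lt_iff₀ hq0).1 (lt_of_le_of_lt h1 h2)
      linarith
    -- total count
    have htot : (Finset.range T).card =
        ∑ i : Fin n, ((Finset.range T).filter (fun s => S' s = i)).card :=
      Finset.card_eq_sum_card_fiberwise (fun x _ => Finset.mem_univ (S' x))
    -- per i real bound
    have hreal : ∀ i ∈ Finset.univ, (T : ℝ) / (g i : ℝ) - 2 <
        (((Finset.range T).filter (fun s => S' s = i)).card : ℝ) := by
      intro i _
      have h1 := hcard i T
      have h2 : ((T / g i : ℕ) : ℝ) ≤
          (((Finset.range T).filter (fun s => S' s = i)).card : ℝ) + 1 := by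
        have : T / g i ≤ ((Finset.range T).filter (fun s => S' s = i)).card + 1 := by omega
        exact_mod_cast this
      have h3 : (T : ℝ) / (g i : ℝ) < ((T / g i : ℕ) : ℝ) + 1 := by
        have hmod : T < (T / g i + 1) * g i := by
          have e1 := Nat.div_add_mod T (g i)
          have e2 := Nat.mod_lt T (hgpos i)
          nlinarith
        have : (T : ℝ) < (((T / g i : ℕ) : ℝ) + 1) * (g i : ℝ) := by
          exact_mod_cast hmod
        rw [div_lt_iff₀ (hgr i)]
        linarith
      linarith
    have hsum : (T : ℝ) * q - 2 * n < (T : ℝ) := by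
      have h1 : ∑ i : Fin n, ((T : ℝ) / (g i : ℝ) - 2) <
          ∑ i : Fin n, (((Finset.range T).filter (fun s => S' s = i)).card : ℝ) :=
        Finset.sum_lt_sum_of_nonempty Finset.univ_nonempty hreal
      have h2 : ∑ i : Fin n, ((T : ℝ) / (g i : ℝ) - 2) = (T : ℝ) * q - 2 * n := by
        rw [Finset.sum_sub_distrib, Finset.sum_const, Finset.card_univ, Fintype.card_fin]
        rw [hq, Finset.mul_sum]
        congr 1
        · apply Finset.sum_congr rfl
          intro i _
          rw [mul_one_div]
        · push_cast; ring
      have h3 : ∑ i : Fin n, (((Finset.range T).filter (fun s => S' s = i)).card : ℝ)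
          = (T : ℝ) := by
        rw [← Nat.cast_sum, ← htot, Finset.card_range]
      rw [h2, h3] at h1
      exact h1
    nlinarith
end

section
/- If every Pinwheel instance of density at most 3/4 is feasible, then for every discrete BGT instance I with rates h_1 ≥ ... ≥ h_n summing to H, setting δ = 1/3 + h_1/H and f_i = ⌊(1+δ)H/h_i⌋ yields a Pinwheel instance of density strictly less than 3/4; consequently there is a schedule keeping all bamboos at height at most (4/3 + h_1/H)·H. -/
/-- If every Pinwheel instance of density at most `3/4` is feasible, then for every
BGT instance (rates `h` with maximum `h ⟨0,_⟩` and total `H`), taking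
`δ = 1/3 + h₁/H` and `fᵢ = ⌊(1+δ)H/hᵢ⌋` gives a Pinwheel instance of density `< 3/4`;
consequently there is a schedule keeping all bamboos at height at most `(4/3 + h₁/H)·H`. -/
theorem bgt_four_thirds_approx
    (hyp : ∀ (m : ℕ) (g : Fin m → ℕ), (∀ i, 2 ≤ g i) →
      (∑ i, (1 : ℝ) / (g i)) ≤ 3 / 4 → PinFeasible g)
    (n : ℕ) (hn : 0 < n) (h : Fin n → ℝ) (hpos : ∀ i, 0 < h i)
    (hmax : ∀ i, h i ≤ h ⟨0, hn⟩) :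
    (∑ i, (1 : ℝ) /
        ((⌊(1 + (1/3 + h ⟨0, hn⟩ / ∑ j, h j)) * (∑ j, h j) / h i⌋₊ : ℕ) : ℝ)) < 3 / 4 ∧
    ∃ S : ℕ → Fin n, ∀ (i : Fin n) (t : ℕ),
      bgtHeight h S i t ≤ (4/3 + h ⟨0, hn⟩ / ∑ j, h j) * ∑ j, h j := by
  set H := ∑ j, h j with hH
  have hne : (Finset.univ : Finset (Fin n)).Nonempty := ⟨⟨0, hn⟩, Finset.mem_univ _⟩
  have hHpos : 0 < H := Finset.sum_pos (fun i _ => hpos i) hne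
  set h0 := h ⟨0, hn⟩ with hh0
  set c := 1 + (1/3 + h0 / H) with hc
  have hle : ∀ i, h i ≤ H := fun i =>
    Finset.single_le_sum (fun j _ => (hpos j).le) (Finset.mem_univ i)
  have hcH : c * H = 4/3 * H + h0 := by
    rw [hc]; field_simp; ring
  have hx : ∀ i, (7:ℝ)/3 ≤ c * H / h i := by
    intro i
    rw [le_div_iff₀ (hpos i)]
    have h1 : h i ≤ h0 := hmax i
    have h2 : h i ≤ H := hle i
    nlinarith [hpos i]
  have hf2 : ∀ i, 2 ≤ ⌊c * H / h i⌋₊ := by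
    intro i
    apply Nat.le_floor
    have := hx i; push_cast; linarith
  have key : ∀ i, (1:ℝ) / (⌊c * H / h i⌋₊ : ℝ) < 3/4 * (h i / H) := by
    intro i
    have hxi := hx i
    have hfl : c * H / h i - 1 < (⌊c * H / h i⌋₊ : ℝ) := Nat.sub_one_lt_floor _
    have hpos1 : (0:ℝ) < c * H / h i - 1 := by linarith
    have h1 : (1:ℝ) / (⌊c * H / h i⌋₊ : ℝ) < 1 / (c * H / h i - 1) :=
      one_div_lt_one_div_of_lt hpos1 hfl
    have h2 : (1:ℝ) / (c * H / h i - 1) ≤ 3/4 * (h i / H) := by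
      rw [div_le_iff₀ hpos1]
      have heq : 3/4 * (h i / H) * (c * H / h i - 1) = 1 + 3/4 * ((h0 - h i) / H) := by
        have hni : h i ≠ 0 := (hpos i).ne'
        have hnH : H ≠ 0 := hHpos.ne'
        rw [hc]; field_simp; ring
      rw [heq]
      have : 0 ≤ (h0 - h i) / H := div_nonneg (by linarith [hmax i]) hHpos.le
      linarith
    linarith
  have hsumlt : (∑ i, (1:ℝ) / (⌊c * H / h i⌋₊ : ℝ)) < ∑ i, 3/4 * (h i / H) :=
    Finset.sum_lt_sum_of_nonempty hne (fun i _ => key i)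
  have hsumeq : (∑ i, 3/4 * (h i / H)) = 3/4 := by
    rw [← Finset.mul_sum, ← Finset.sum_div, ← hH, div_self hHpos.ne', mul_one]
  have main : (∑ i, (1:ℝ) / (⌊c * H / h i⌋₊ : ℝ)) < 3/4 := by
    rw [← hsumeq]; exact hsumlt
  refine ⟨by exact_mod_cast main, ?_⟩
  obtain ⟨S, hS⟩ := hyp n (fun i => ⌊c * H / h i⌋₊) hf2 (le_of_lt main)
  refine ⟨S, fun i t => ?_⟩
  have hgap : (t : ℝ) - (lastCut S i t : ℝ) ≤ (⌊c * H / h i⌋₊ : ℕ) := by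
    by_cases hcase : t ≤ ⌊c * H / h i⌋₊
    · have : (0:ℝ) ≤ (lastCut S i t : ℝ) := Nat.cast_nonneg _
      have ht : (t : ℝ) ≤ (⌊c * H / h i⌋₊ : ℝ) := by exact_mod_cast hcase
      linarith
    · push_neg at hcase
      obtain ⟨s, hs1, hs2, hs3⟩ := hS i (t - ⌊c * H / h i⌋₊)
      have hs2' : s < t - ⌊c * H / h i⌋₊ + ⌊c * H / h i⌋₊ := hs2
      have hst : s < t := by omega
      have hmem : s ∈ (Finset.range t).filter (fun s => S s = i) := by
        simp [Finset.mem_filter, Finset.mem_range, hst, hs3]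
      have hsup : s ≤ lastCut S i t := Finset.le_sup (f := id) hmem
      have : t ≤ s + ⌊c * H / h i⌋₊ := by omega
      clear hs2
      have h1 : (t : ℝ) ≤ (s : ℝ) + (⌊c * H / h i⌋₊ : ℝ) := by exact_mod_cast this
      have h2 : (s : ℝ) ≤ (lastCut S i t : ℝ) := by exact_mod_cast hsup
      linarith
  have hfloor : (⌊c * H / h i⌋₊ : ℝ) ≤ c * H / h i :=
    Nat.floor_le (by have := hx i; linarith)
  have : bgtHeight h S i t ≤ h i * (c * H / h i) := by
    unfold bgtHeight
    have := (hx i)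
    apply mul_le_mul_of_nonneg_left _ (hpos i).le
    push_cast at hgap ⊢
    linarith [hfloor]
  have heq2 : h i * (c * H / h i) = c * H := by
    rw [mul_comm, div_mul_cancel₀ _ (hpos i).ne']
  have hc2 : (4/3 + h0 / H) * H = c * H := by rw [hc]; ring
  rw [hc2]
  exact this.trans heq2.le
end

section
/- For K ∈ {1, 2} and all δ ∈ [0, 3], the quantity 1/(1+δ) + (√(2K)/3)·(δ/√(1+δ))·(1/(1+δ) + (ln 2)/K) is at most 1, with equality exactly at δ = 0. -/
lemma quad_neg_aux (c L s : ℝ) (hc : 0 < c) (hL : 0 < L) (h1 : 1 ≤ s) (h2 : s ≤ 2)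
    (e1 : c * L + c < 1) (e2 : 4 * (c * L) + c < 2) :
    c * L * s ^ 2 - s + c < 0 := by
  nlinarith [mul_nonneg (sub_nonneg.2 h1) (sub_nonneg.2 h2),
    mul_pos hc hL, mul_nonneg (sub_nonneg.2 h2) (by linarith : (0:ℝ) ≤ 1 - (c * L + c)),
    mul_nonneg (sub_nonneg.2 h1) (by linarith : (0:ℝ) ≤ 2 - (4 * (c * L) + c))]

lemma main_aux (c L δ : ℝ) (hc : 0 < c) (hL : 0 < L) (h0 : 0 ≤ δ) (h3 : δ ≤ 3)
    (e1 : c * L + c < 1) (e2 : 4 * (c * L) + c < 2) :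
    (1 / (1 + δ) + c * (δ / Real.sqrt (1 + δ)) * (1 / (1 + δ) + L) ≤ 1) ∧
    (1 / (1 + δ) + c * (δ / Real.sqrt (1 + δ)) * (1 / (1 + δ) + L) = 1 ↔ δ = 0) := by
  set s := Real.sqrt (1 + δ) with hs
  have hs0 : 0 < s := Real.sqrt_pos.2 (by linarith)
  have hsq : s ^ 2 = 1 + δ := Real.sq_sqrt (by linarith)
  have hs1 : 1 ≤ s := by nlinarith
  have hs2 : s ≤ 2 := by nlinarith
  have hg : c * L * s ^ 2 - s + c < 0 := quad_neg_aux c L s hc hL hs1 hs2 e1 e2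
  have hid : 1 / (1 + δ) + c * (δ / s) * (1 / (1 + δ) + L) - 1
      = (δ / s ^ 3) * (c * L * s ^ 2 - s + c) := by
    rw [show (1:ℝ) + δ = s ^ 2 from hsq.symm, show δ = s ^ 2 - 1 by linarith]
    have hsne : s ≠ 0 := ne_of_gt hs0
    field_simp
    ring
  constructor
  · have : (δ / s ^ 3) * (c * L * s ^ 2 - s + c) ≤ 0 :=
      mul_nonpos_of_nonneg_of_nonpos (div_nonneg h0 (by positivity)) (le_of_lt hg)
    linarith
  · constructor
    · intro h
      have h' : (δ / s ^ 3) * (c * L * s ^ 2 - s + c) = 0 := by linarith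
      rcases mul_eq_zero.1 h' with h'' | h''
      · have : δ = 0 := by
          field_simp at h''
          simpa using h''
        exact this
      · linarith
    · intro h
      subst h
      simp

/-- For `K ∈ {1,2}` and `δ ∈ [0,3]`,
`1/(1+δ) + (√(2K)/3)·(δ/√(1+δ))·(1/(1+δ) + ln2/K) ≤ 1`, with equality iff `δ = 0`. -/
theorem main_algorithm_key_inequality (K : ℝ) (hK : K = 1 ∨ K = 2)
    (δ : ℝ) (h0 : 0 ≤ δ) (h3 : δ ≤ 3) :
    (1 / (1 + δ) + (Real.sqrt (2 * K) / 3) * (δ / Real.sqrt (1 + δ)) *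
        (1 / (1 + δ) + Real.log 2 / K) ≤ 1) ∧
    (1 / (1 + δ) + (Real.sqrt (2 * K) / 3) * (δ / Real.sqrt (1 + δ)) *
        (1 / (1 + δ) + Real.log 2 / K) = 1 ↔ δ = 0) := by
  have hlog1 : Real.log 2 < 0.6931471808 := Real.log_two_lt_d9
  have hlog0 : (0.6931471803 : ℝ) < Real.log 2 := Real.log_two_gt_d9
  rcases hK with h | h
  · subst h
    have hsq2 : Real.sqrt (2 * 1) = Real.sqrt 2 := by norm_num
    have hub : Real.sqrt 2 < 1.41422 := by
      nlinarith [Real.sq_sqrt (show (0:ℝ) ≤ 2 by norm_num), Real.sqrt_nonneg 2]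
    have hpos : 0 < Real.sqrt 2 := Real.sqrt_pos.2 (by norm_num)
    rw [hsq2]
    have := main_aux (Real.sqrt 2 / 3) (Real.log 2 / 1) δ (by positivity) (by positivity)
      h0 h3 (by nlinarith) (by nlinarith)
    simpa using this
  · subst h
    have hsq2 : Real.sqrt (2 * 2) = 2 := by
      rw [show (2:ℝ) * 2 = 2 ^ 2 by norm_num, Real.sqrt_sq (by norm_num)]
    rw [hsq2]
    exact main_aux (2 / 3) (Real.log 2 / 2) δ (by norm_num) (by positivity)
      h0 h3 (by nlinarith) (by nlinarith)
end

section
/- For 0 < x < 1 and 0 < ε < min(x, 1−x), on the discrete BGT instance (x, ε) the strategy Reduce-Fastest(x) never cuts bamboo b_2, so b_2's height tends to infinity, while OPT = 2x is finite. Hence Reduce-Fastest(x) has unbounded approximation ratio for every x < 1 (with H normalized, here H = x + ε). -/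
/-- Last cut day of bamboo `i` before day `t` (`0` if never cut); values of `S` that
are not bamboo indices mean that no bamboo is cut that day. -/
def lastCutN (S : ℕ → ℕ) (i t : ℕ) : ℕ :=
  ((Finset.range t).filter (fun s => S s = i)).sup id

noncomputable def bgtHeightN (h : ℕ → ℝ) (S : ℕ → ℕ) (i t : ℕ) : ℝ :=
  h i * ((t : ℝ) - (lastCutN S i t : ℝ))

lemma lastCutN_le (S : ℕ → ℕ) (i t : ℕ) (ht : 1 ≤ t) :
    lastCutN S i t ≤ t - 1 := by
  apply Finset.sup_le
  intro s hs
  simp only [Finset.mem_filter, Finset.mem_range] at hs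
  exact Nat.le_sub_one_of_lt hs.1

lemma le_lastCutN (S : ℕ → ℕ) (i t s : ℕ) (hs : s < t) (hSs : S s = i) :
    s ≤ lastCutN S i t := by
  apply Finset.le_sup (f := id)
  simp [Finset.mem_filter, Finset.mem_range, hs, hSs]

lemma lastCutN_eq_zero (S : ℕ → ℕ) (i t : ℕ) (h : ∀ s, 1 ≤ s → S s ≠ i) :
    lastCutN S i t = 0 := by
  apply Nat.le_zero.mp
  apply Finset.sup_le
  intro s hs
  simp only [Finset.mem_filter, Finset.mem_range] at hs
  by_contra hpos
  exact h s (Nat.one_le_iff_ne_zero.mpr (by simpa using hpos)) hs.2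

/-- On the instance `(x, ε)` with `0 < x < 1`, `0 < ε < min(x, 1-x)` and `H = x + ε`,
any Reduce-Fastest(x) schedule (cut the fastest-growing bamboo among those of height
`≥ x·H`, cut nothing if none qualifies) always cuts `b₁` and never cuts `b₂`, so the
height of `b₂` tends to infinity, while the optimum `2x` is finite: some schedule keeps
both bamboos at height `≤ 2x`, and no schedule keeps both strictly below `2x`.
Hence Reduce-Fastest(x) has unbounded approximation ratio for `x < 1`. -/
theorem reduce_fastest_unbounded (x ε : ℝ) (hx0 : 0 < x) (hx1 : x < 1)
    (hε0 : 0 < ε) (hεm : ε < min x (1 - x)) (S : ℕ → ℕ) :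
    ∀ h : ℕ → ℝ, h = (fun i => if i = 0 then x else if i = 1 then ε else 0) →
    (∀ t, 1 ≤ t →
        (x * (x + ε) ≤ bgtHeightN h S 0 t → S t = 0) ∧
        (bgtHeightN h S 0 t < x * (x + ε) ∧ x * (x + ε) ≤ bgtHeightN h S 1 t →
          S t = 1) ∧
        (bgtHeightN h S 0 t < x * (x + ε) ∧ bgtHeightN h S 1 t < x * (x + ε) →
          S t ≠ 0 ∧ S t ≠ 1)) →
    (∀ t, 1 ≤ t → S t = 0) ∧
    Filter.Tendsto (fun t => bgtHeightN h S 1 t) Filter.atTop Filter.atTop ∧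
    (∃ S' : ℕ → ℕ, ∀ t, bgtHeightN h S' 0 t ≤ 2 * x ∧ bgtHeightN h S' 1 t ≤ 2 * x) ∧
    (∀ S'' : ℕ → ℕ, ¬ (∀ t, bgtHeightN h S'' 0 t < 2 * x ∧ bgtHeightN h S'' 1 t < 2 * x)) := by
  intro h hh hS
  have hεx : ε < x := lt_of_lt_of_le hεm (min_le_left _ _)
  have hεx1 : ε < 1 - x := lt_of_lt_of_le hεm (min_le_right _ _)
  have h0 : h 0 = x := by simp [hh]
  have h1 : h 1 = ε := by simp [hh]
  -- generic bound: last cut is < t, so height of bamboo i at time t ≥ 1 is ≥ h i.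
  have hdiff1 : ∀ i (t : ℕ), 1 ≤ t → (1 : ℝ) ≤ (t : ℝ) - (lastCutN S i t : ℝ) := by
    intro i t ht
    have hc : lastCutN S i t ≤ t - 1 := lastCutN_le S i t ht
    have : (lastCutN S i t : ℝ) ≤ ((t - 1 : ℕ) : ℝ) := by exact_mod_cast hc
    rw [Nat.cast_sub ht] at this
    push_cast at this ⊢
    linarith
  -- Part 1: Reduce-Fastest always cuts bamboo 0.
  have part1 : ∀ t, 1 ≤ t → S t = 0 := by
    intro t ht
    apply (hS t ht).1
    rw [bgtHeightN, h0]
    have := hdiff1 0 t ht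
    nlinarith
  refine ⟨part1, ?_, ?_, ?_⟩
  -- Part 2: bamboo 1 is never cut, so its height is ε·t → ∞.
  · have hc1 : ∀ t, lastCutN S 1 t = 0 := by
      intro t
      apply lastCutN_eq_zero
      intro s hs
      rw [part1 s hs]; exact zero_ne_one
    have heq : ∀ t : ℕ, bgtHeightN h S 1 t = ε * t := by
      intro t
      rw [bgtHeightN, h1, hc1]
      push_cast; ring
    simp only [heq]
    exact (tendsto_natCast_atTop_atTop (R := ℝ)).const_mul_atTop hε0
  -- Part 3: the alternating schedule keeps both heights ≤ 2x.
  · refine ⟨fun n => n % 2, ?_⟩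
    have key : ∀ i, i < 2 → ∀ t : ℕ,
        (t : ℝ) - (lastCutN (fun n => n % 2) i t : ℝ) ≤ 2 := by
      intro i hi t
      rcases le_or_gt t 1 with htle | htgt
      · have : (t : ℝ) ≤ 1 := by exact_mod_cast htle
        have hc : (0 : ℝ) ≤ (lastCutN (fun n => n % 2) i t : ℝ) := Nat.cast_nonneg _
        linarith
      · -- t ≥ 2 : some day s with t - 2 ≤ s < t has s % 2 = i
        by_cases hpar : t % 2 = i
        · have hs1 : t - 2 < t := by omega
          have hs2 : (t - 2) % 2 = i := by omega
          have hle := le_lastCutN (fun n => n % 2) i t (t - 2) hs1 hs2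
          have ht2 : t ≤ (t - 2) + 2 := by omega
          have h1' : (t : ℝ) ≤ ((t - 2 : ℕ) : ℝ) + 2 := by exact_mod_cast ht2
          have h2' : ((t - 2 : ℕ) : ℝ) ≤ (lastCutN (fun n => n % 2) i t : ℝ) := by
            exact_mod_cast hle
          linarith
        · have hs1 : t - 1 < t := by omega
          have hs2 : (t - 1) % 2 = i := by omega
          have hle := le_lastCutN (fun n => n % 2) i t (t - 1) hs1 hs2
          have ht2 : t ≤ (t - 1) + 2 := by omega
          have h1' : (t : ℝ) ≤ ((t - 1 : ℕ) : ℝ) + 2 := by exact_mod_cast ht2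
          have h2' : ((t - 1 : ℕ) : ℝ) ≤ (lastCutN (fun n => n % 2) i t : ℝ) := by
            exact_mod_cast hle
          linarith
    intro t
    constructor
    · rw [bgtHeightN, h0]
      have := key 0 (by norm_num) t
      nlinarith
    · rw [bgtHeightN, h1]
      have := key 1 (by norm_num) t
      nlinarith
  -- Part 4: no schedule keeps both heights strictly below 2x.
  · intro S'' hcon
    -- if bamboo 0 always stays < 2x, it must be cut every day s ≥ 1
    have step1 : ∀ s, 1 ≤ s → S'' s = 0 := by
      intro s hs
      have hlt := (hcon (s + 1)).1
      rw [bgtHeightN, h0] at hlt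
      set c := lastCutN S'' 0 (s + 1) with hc
      have hdiff : ((s + 1 : ℕ) : ℝ) - (c : ℝ) < 2 := by
        nlinarith
      have hcs : s ≤ c := by
        have : ((s : ℕ) : ℝ) < (c : ℝ) + 1 := by push_cast at hdiff ⊢; linarith
        exact_mod_cast Nat.lt_add_one_iff.mp (by exact_mod_cast this)
      have hcle : c ≤ s := by
        have := lastCutN_le S'' 0 (s + 1) (by omega)
        omega
      have hcs' : c = s := le_antisymm hcle hcs
      -- the sup is attained, hence S'' s = 0
      have hne : (((Finset.range (s + 1)).filter (fun u => S'' u = 0))).Nonempty := by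
        by_contra hne
        rw [Finset.not_nonempty_iff_eq_empty] at hne
        have : c = 0 := by rw [hc, lastCutN, hne]; simp
        omega
      obtain ⟨b, hb, heq⟩ := Finset.exists_mem_eq_sup _ hne id
      simp only [Finset.mem_filter, Finset.mem_range] at hb
      have : c = b := heq
      rw [← hb.2]
      congr 1
      omega
    have hc1 : lastCutN S'' 1 = fun t => 0 := by
      funext t
      apply lastCutN_eq_zero
      intro u hu
      rw [step1 u hu]; exact zero_ne_one
    obtain ⟨n, hn⟩ := exists_nat_gt (2 * x / ε)
    have hlt := (hcon n).2
    rw [bgtHeightN, h1] at hlt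
    have hz : lastCutN S'' 1 n = 0 := by rw [hc1]
    rw [hz] at hlt
    have : 2 * x / ε < (n : ℝ) := hn
    have : 2 * x < ε * n := by
      rw [div_lt_iff₀ hε0] at this
      linarith
    push_cast at hlt
    linarith
end

section
/- In continuous BGT, for any schedule and any subset V' of the bamboo locations, the maximum height ever reached by some bamboo is at least h_min(V')·MST(V'), where h_min(V') is the minimum growth rate among points of V' and MST(V') is the minimum weight of a spanning tree on V'. -/
noncomputable def lastVisit {n : ℕ} (τ : ℕ → ℝ) (visits : ℕ → Fin n) (i : Fin n) (t : ℝ) : ℝ :=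
  sSup {s : ℝ | ∃ j : ℕ, visits j = i ∧ τ j = s ∧ s ≤ t}

noncomputable def contHeight {n : ℕ} (h : Fin n → ℝ) (τ : ℕ → ℝ) (visits : ℕ → Fin n)
    (i : Fin n) (t : ℝ) : ℝ :=
  h i * (t - lastVisit τ visits i t)

/-- The set of total weights of spanning trees of `V'` (with edge weights `d`):
edge sets over `V'` with `|V'| - 1` edges connecting all of `V'`. -/
def treeWeights {n : ℕ} (d : Fin n → Fin n → ℝ) (V' : Finset (Fin n)) : Set ℝ :=
  { w | ∃ E : Finset (Fin n × Fin n),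
      (∀ e ∈ E, e.1 ∈ V' ∧ e.2 ∈ V') ∧
      E.card = V'.card - 1 ∧
      (∀ a ∈ V', ∀ b ∈ V',
        Relation.ReflTransGen (fun u v => (u, v) ∈ E ∨ (v, u) ∈ E) a b) ∧
      w = ∑ e ∈ E, d e.1 e.2 }

section Aux

variable {n : ℕ} (d : Fin n → Fin n → ℝ) (visits : ℕ → Fin n)

lemma walk_d (dself : ∀ i, d i i = 0) (dtri : ∀ i j k, d i k ≤ d i j + d j k) :
    ∀ a b : ℕ, a ≤ b →
      d (visits a) (visits b) ≤ ∑ i ∈ Finset.Ico a b, d (visits i) (visits (i + 1)) := by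
  intro a b hab
  induction b, hab using Nat.le_induction with
  | base => simp [dself]
  | succ b hab ih =>
      rw [Finset.sum_Ico_succ_top hab]
      calc d (visits a) (visits (b + 1))
          ≤ d (visits a) (visits b) + d (visits b) (visits (b + 1)) := dtri _ _ _
        _ ≤ _ := by linarith

lemma tree_of_indices (dnonneg : ∀ i j, 0 ≤ d i j) (dself : ∀ i, d i i = 0)
    (dtri : ∀ i j k, d i k ≤ d i j + d j k) :
    ∀ N (S : Finset ℕ) (hS : S.Nonempty), S.card ≤ N →
      (∀ j ∈ S, ∀ k ∈ S, visits j = visits k → j = k) →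
      ∃ E : Finset (Fin n × Fin n),
        (∀ e ∈ E, e.1 ∈ S.image visits ∧ e.2 ∈ S.image visits) ∧
        E.card = S.card - 1 ∧
        (∀ a ∈ S.image visits, ∀ b ∈ S.image visits,
          Relation.ReflTransGen (fun u v => (u, v) ∈ E ∨ (v, u) ∈ E) a b) ∧
        ∑ e ∈ E, d e.1 e.2 ≤
          ∑ i ∈ Finset.Ico (S.min' hS) (S.max' hS), d (visits i) (visits (i + 1)) := by
  intro N
  induction N with
  | zero =>
      intro S hS hcard _
      exact absurd (Finset.card_pos.mpr hS) (by omega)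
  | succ N ih =>
      intro S hS hcard hinj
      set M := S.max' hS with hM
      have hMS : M ∈ S := S.max'_mem hS
      by_cases hS' : (S.erase M).Nonempty
      · -- inductive step
        set S' := S.erase M with hS'def
        have hsub : S' ⊆ S := Finset.erase_subset _ _
        have hcard' : S'.card = S.card - 1 := Finset.card_erase_of_mem hMS
        have hScard : 1 ≤ S'.card := Finset.card_pos.mpr hS'
        obtain ⟨E', hE'mem, hE'card, hE'conn, hE'sum⟩ :=
          ih S' hS' (by omega) (fun j hj k hk => hinj j (hsub hj) k (hsub hk))
        set M' := S'.max' hS' with hM'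
        have hM'S' : M' ∈ S' := S'.max'_mem hS'
        have hM'S : M' ∈ S := hsub hM'S'
        have hM'ltM : M' < M := by
          have h1 : M' ≤ M := S.le_max' _ hM'S
          have h2 : M' ≠ M := Finset.ne_of_mem_erase hM'S'
          omega
        have hMnot : visits M ∉ S'.image visits := by
          intro hmem
          obtain ⟨j, hj, hjeq⟩ := Finset.mem_image.mp hmem
          have hjM : j = M := hinj j (hsub hj) M hMS hjeq
          rw [hjM] at hj
          exact Finset.notMem_erase M S hj
        have hnotE' : (visits M', visits M) ∉ E' := by
          intro hmem
          exact hMnot (hE'mem _ hmem).2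
        refine ⟨insert (visits M', visits M) E', ?_, ?_, ?_, ?_⟩
        · intro e he
          rcases Finset.mem_insert.mp he with he | he
          · subst he
            exact ⟨Finset.mem_image_of_mem _ hM'S, Finset.mem_image_of_mem _ hMS⟩
          · exact ⟨Finset.image_subset_image hsub (hE'mem e he).1,
              Finset.image_subset_image hsub (hE'mem e he).2⟩
        · rw [Finset.card_insert_of_notMem hnotE', hE'card]
          omega
        · -- connectivity
          have hsymm : Symmetric (fun u v =>
              (u, v) ∈ insert (visits M', visits M) E' ∨
              (v, u) ∈ insert (visits M', visits M) E') := by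
            intro a b hab; tauto
          have hconn : ∀ a ∈ S.image visits,
              Relation.ReflTransGen (fun u v =>
                (u, v) ∈ insert (visits M', visits M) E' ∨
                (v, u) ∈ insert (visits M', visits M) E') a (visits M') := by
            intro a ha
            obtain ⟨j, hj, hjeq⟩ := Finset.mem_image.mp ha
            by_cases hjM : j = M
            · subst hjM; subst hjeq
              exact Relation.ReflTransGen.single
                (Or.inr (Finset.mem_insert_self _ _))
            · have hj' : j ∈ S' := Finset.mem_erase.mpr ⟨hjM, hj⟩
              subst hjeq
              have := hE'conn _ (Finset.mem_image_of_mem _ hj') _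
                (Finset.mem_image_of_mem _ hM'S')
              exact Relation.ReflTransGen.mono (r := fun u v => (u, v) ∈ E' ∨ (v, u) ∈ E') (fun u v (huv : (u, v) ∈ E' ∨ (v, u) ∈ E') => by
                rcases huv with h1 | h1
                · exact Or.inl (Finset.mem_insert_of_mem h1)
                · exact Or.inr (Finset.mem_insert_of_mem h1)) _ _ this
          intro a ha b hb
          exact (hconn a ha).trans ((@Relation.ReflTransGen.stdSymm _ _ ⟨fun _ _ h => hsymm h⟩).symm _ _ (hconn b hb))
        · -- sum bound
          rw [Finset.sum_insert hnotE']
          have hminS' : S'.min' hS' = S.min' hS := by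
            have h1 : S.min' hS ≤ S'.min' hS' :=
              S.min'_le _ (hsub (S'.min'_mem hS'))
            have h2 : S'.min' hS' ≤ S.min' hS := by
              have hmem : S.min' hS ∈ S := S.min'_mem hS
              by_cases hminM : S.min' hS = M
              · have := S'.min'_le _ hM'S'
                omega
              · exact S'.min'_le _ (Finset.mem_erase.mpr ⟨hminM, hmem⟩)
            omega
          have hd : d (visits M') (visits M) ≤
              ∑ i ∈ Finset.Ico M' M, d (visits i) (visits (i + 1)) :=
            walk_d d visits dself dtri M' M hM'ltM.le
          have hmin'le : S'.min' hS' ≤ M' := S'.min'_le _ hM'S'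
          have hsplit : ∑ i ∈ Finset.Ico (S'.min' hS') M', d (visits i) (visits (i + 1)) +
              ∑ i ∈ Finset.Ico M' M, d (visits i) (visits (i + 1)) =
              ∑ i ∈ Finset.Ico (S'.min' hS') M, d (visits i) (visits (i + 1)) :=
            Finset.sum_Ico_consecutive _ hmin'le hM'ltM.le
          calc d (visits M') (visits M) + ∑ e ∈ E', d e.1 e.2
              ≤ ∑ i ∈ Finset.Ico M' M, d (visits i) (visits (i + 1)) +
                ∑ i ∈ Finset.Ico (S'.min' hS') M', d (visits i) (visits (i + 1)) := by
                linarith [hE'sum]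
            _ = ∑ i ∈ Finset.Ico (S'.min' hS') M, d (visits i) (visits (i + 1)) := by
                linarith
            _ = _ := by rw [hminS']
      · -- S = {M}
        have hSsingle : S = {M} := by
          apply Finset.eq_singleton_iff_unique_mem.mpr
          refine ⟨hMS, fun x hx => ?_⟩
          by_contra hxM
          exact hS' ⟨x, Finset.mem_erase.mpr ⟨hxM, hx⟩⟩
        refine ⟨∅, by simp, by simp [hSsingle], ?_, ?_⟩
        · intro a ha b hb
          rw [hSsingle] at ha hb
          simp only [Finset.image_singleton, Finset.mem_singleton] at ha hb
          subst ha; subst hb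
          exact Relation.ReflTransGen.refl
        · simp only [Finset.sum_empty]
          exact Finset.sum_nonneg fun i _ => dnonneg _ _

end Aux

/-- Continuous BGT lower bound: for any schedule and any nonempty subset `V'` of the
points, if `B` bounds all bamboo heights at all times then
`B ≥ h_min(V') · MST(V')`, where `MST(V')` is the minimum spanning-tree weight of `V'`. -/
theorem continuous_bgt_mst_lower_bound (n : ℕ) (hn : 1 ≤ n)
    (d : Fin n → Fin n → ℝ)
    (dnonneg : ∀ i j, 0 ≤ d i j) (dself : ∀ i, d i i = 0)
    (dsymm : ∀ i j, d i j = d j i) (dtri : ∀ i j k, d i k ≤ d i j + d j k)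
    (h : Fin n → ℝ) (hpos : ∀ i, 0 < h i)
    (V' : Finset (Fin n)) (hne : V'.Nonempty)
    (visits : ℕ → Fin n) (τ : ℕ → ℝ)
    (hv0 : visits 0 = ⟨0, by omega⟩) (hτ0 : τ 0 = 0)
    (hmove : ∀ k, τ k + d (visits k) (visits (k + 1)) ≤ τ (k + 1))
    (B : ℝ) (hB : ∀ (i : Fin n) (t : ℝ), 0 ≤ t → contHeight h τ visits i t ≤ B) :
    (V'.inf' hne h) * sInf (treeWeights d V') ≤ B := by
  -- τ is monotone and nonnegative
  have τmono : ∀ j k : ℕ, j ≤ k → τ j ≤ τ k := by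
    intro j k hjk
    induction k, hjk using Nat.le_induction with
    | base => exact le_refl _
    | succ k hjk ih =>
        have := hmove k
        have := dnonneg (visits k) (visits (k + 1))
        linarith
  have τnonneg : ∀ j, 0 ≤ τ j := fun j => hτ0 ▸ τmono 0 j (Nat.zero_le j)
  -- B is nonnegative
  have hB0 : 0 ≤ B := by
    have hmem : (0 : ℝ) ∈ {s : ℝ | ∃ j : ℕ, visits j = visits 0 ∧ τ j = s ∧ s ≤ 0} :=
      ⟨0, rfl, hτ0, le_refl 0⟩
    have hub : ∀ s ∈ {s : ℝ | ∃ j : ℕ, visits j = visits 0 ∧ τ j = s ∧ s ≤ 0}, s ≤ 0 :=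
      fun s ⟨j, _, _, hs⟩ => hs
    have hlv : lastVisit τ visits (visits 0) 0 = 0 := by
      unfold lastVisit
      apply le_antisymm
      · exact csSup_le ⟨0, hmem⟩ hub
      · exact le_csSup ⟨0, hub⟩ hmem
    have := hB (visits 0) 0 (le_refl 0)
    unfold contHeight at this
    rw [hlv] at this
    simpa using this
  -- every point of V' is visited
  have hvisited : ∀ v : Fin n, ∃ j, visits j = v := by
    intro v
    by_contra hnv
    push_neg at hnv
    have hempty : ∀ t : ℝ, {s : ℝ | ∃ j : ℕ, visits j = v ∧ τ j = s ∧ s ≤ t} = ∅ := by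
      intro t
      ext s
      simp only [Set.mem_setOf_eq, Set.mem_empty_iff_false, iff_false]
      rintro ⟨j, hj, _⟩
      exact hnv j hj
    set t := (|B| + 1) / h v with ht
    have htpos : 0 ≤ t := div_nonneg (by positivity) (hpos v).le
    have := hB v t htpos
    unfold contHeight lastVisit at this
    rw [hempty t, Real.sSup_empty] at this
    rw [sub_zero, ht, mul_div_cancel₀ _ (hpos v).ne'] at this
    have : |B| + 1 ≤ |B| := le_trans this (le_abs_self B)
    linarith
  -- first-visit function
  set f : Fin n → ℕ := fun v => sInf {j | visits j = v} with hf
  have hfv : ∀ v : Fin n, visits (f v) = v := by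
    intro v
    have : {j | visits j = v}.Nonempty := hvisited v
    exact Nat.sInf_mem this
  have hfmin : ∀ (v : Fin n) (j : ℕ), visits j = v → f v ≤ j :=
    fun v j hj => Nat.sInf_le hj
  -- the index set
  set S : Finset ℕ := V'.image f with hS
  have hSne : S.Nonempty := hne.image f
  have hSinj : ∀ j ∈ S, ∀ k ∈ S, visits j = visits k → j = k := by
    intro j hj k hk hjk
    obtain ⟨a, _, rfl⟩ := Finset.mem_image.mp hj
    obtain ⟨b, _, rfl⟩ := Finset.mem_image.mp hk
    rw [hfv a, hfv b] at hjk
    rw [hjk]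
  have hSimage : S.image visits = V' := by
    rw [hS, Finset.image_image]
    apply Finset.ext
    intro x
    simp only [Finset.mem_image, Function.comp_apply]
    constructor
    · rintro ⟨a, ha, rfl⟩; rw [hfv a]; exact ha
    · intro hx; exact ⟨x, hx, hfv x⟩
  have hScard : S.card = V'.card := by
    rw [hS]
    apply Finset.card_image_of_injOn
    intro a _ b _ hab
    have := congrArg visits hab
    rwa [hfv a, hfv b] at this
  -- construct the spanning tree
  obtain ⟨E, hEmem, hEcard, hEconn, hEsum⟩ :=
    tree_of_indices d visits dnonneg dself dtri S.card S hSne (le_refl _) hSinj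
  set K := S.max' hSne with hK
  set W : ℝ := ∑ e ∈ E, d e.1 e.2 with hW
  have hWmem : W ∈ treeWeights d V' := by
    refine ⟨E, ?_, ?_, ?_, rfl⟩
    · intro e he
      rw [← hSimage]
      exact hEmem e he
    · rw [hEcard, hScard]
    · intro a ha b hb
      rw [← hSimage] at ha hb
      exact hEconn a ha b hb
  -- walk length up to K bounded by τ K
  have hwalk : ∀ m : ℕ, ∑ i ∈ Finset.Ico 0 m, d (visits i) (visits (i + 1)) ≤ τ m := by
    intro m
    induction m with
    | zero => simp [hτ0]
    | succ m ih =>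
        rw [Finset.sum_Ico_succ_top (Nat.zero_le m)]
        have := hmove m
        linarith
  have hWτK : W ≤ τ K := by
    calc W ≤ ∑ i ∈ Finset.Ico (S.min' hSne) K, d (visits i) (visits (i + 1)) := hEsum
      _ ≤ ∑ i ∈ Finset.Ico 0 K, d (visits i) (visits (i + 1)) := by
          apply Finset.sum_le_sum_of_subset_of_nonneg
          · apply Finset.Ico_subset_Ico (Nat.zero_le _) (le_refl _)
          · intro i _ _; exact dnonneg _ _
      _ ≤ τ K := hwalk K
  -- the point first visited at time τ K
  have hKS : K ∈ S := S.max'_mem hSne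
  obtain ⟨v0, hv0V, hfv0⟩ := Finset.mem_image.mp hKS
  have hvK : visits K = v0 := by rw [← hfv0, hfv v0]
  -- bamboo at v0 reaches height h v0 * τ K
  have hclaimA : h v0 * τ K ≤ B := by
    have hstep : ∀ t : ℝ, 0 ≤ t → t < τ K → h v0 * t ≤ B := by
      intro t ht htK
      have hempty : {s : ℝ | ∃ j : ℕ, visits j = v0 ∧ τ j = s ∧ s ≤ t} = ∅ := by
        ext s
        simp only [Set.mem_setOf_eq, Set.mem_empty_iff_false, iff_false]
        rintro ⟨j, hj, rfl, hst⟩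
        have hjK : K ≤ j := by
          have := hfmin v0 j hj
          omega
        have := τmono K j hjK
        linarith
      have := hB v0 t ht
      unfold contHeight lastVisit at this
      rw [hempty, Real.sSup_empty, sub_zero] at this
      exact this
    by_contra hcon
    push_neg at hcon
    have hτKpos : 0 < τ K := by
      by_contra hτK
      push_neg at hτK
      have : τ K = 0 := le_antisymm hτK (τnonneg K)
      rw [this] at hcon
      simp at hcon
      linarith
    set t := (B / h v0 + τ K) / 2 with ht
    have hBd : B / h v0 < τ K := (div_lt_iff₀ (hpos v0)).mpr (by linarith [mul_comm (h v0) (τ K)])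
    have ht1 : t < τ K := by rw [ht]; linarith
    have ht2 : B / h v0 < t := by rw [ht]; linarith
    have ht0 : 0 ≤ t := by
      have : 0 ≤ B / h v0 := div_nonneg hB0 (hpos v0).le
      rw [ht]; linarith
    have := hstep t ht0 ht1
    have : B < h v0 * t := by
      have := (div_lt_iff₀ (hpos v0)).mp ht2
      linarith [mul_comm t (h v0)]
    linarith [hstep t ht0 ht1]
  -- finish
  have hmin_pos : 0 < V'.inf' hne h := by
    obtain ⟨v, hv, hveq⟩ := V'.exists_mem_eq_inf' hne h
    rw [hveq]; exact hpos v
  have hmin_le : V'.inf' hne h ≤ h v0 := Finset.inf'_le h hv0V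
  have hbdd : BddBelow (treeWeights d V') := by
    refine ⟨0, fun w hw => ?_⟩
    obtain ⟨E', hE'1, _, _, rfl⟩ := hw
    exact Finset.sum_nonneg fun e _ => dnonneg _ _
  have hsInf : sInf (treeWeights d V') ≤ W := csInf_le hbdd hWmem
  calc V'.inf' hne h * sInf (treeWeights d V')
      ≤ V'.inf' hne h * W := mul_le_mul_of_nonneg_left hsInf hmin_pos.le
    _ ≤ V'.inf' hne h * τ K := mul_le_mul_of_nonneg_left hWτK hmin_pos.le
    _ ≤ h v0 * τ K := mul_le_mul_of_nonneg_right hmin_le (τnonneg K)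
    _ ≤ B := hclaimA
end

section
/- Consider the spiral instance V* with groups G_1,...,G_{(log n)/3} where |G_i| = n/2^i, each point of G_i has growth rate h_i = (3−ε)·2^i/(n·log n), consecutive points are at distance d_1 = n^{−2/3}, and the growth rates sum to at most 1. Then every schedule lets some bamboo in ∪G_i grow to height at least d_1/2. Specifically: if every bamboo of G_i is always kept below height d_1/2, each point of G_i must be revisited within travel distance d_1·(n log n)/2^{i+2}, forcing an effective service rate of at least 2^{i+2}/(n log n) per point; summing over all groups gives Σ_i (2^{i+2}/(n log n))·(n/2^i) = 4/3 > 1, a contradiction with total rate budget 1. -/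
private lemma tele_sum (f : ℕ → ℝ) (a b : ℕ) (hab : a ≤ b) :
    ∑ k ∈ Finset.Ico a b, (f (k + 1) - f k) = f b - f a := by
  rw [Finset.sum_Ico_eq_sub _ hab, Finset.sum_range_sub, Finset.sum_range_sub]
  ring

/-- Per-point accounting lemma: if the point `v` (with growth rate `c`) is visited within
every time window of length `d1/(2c)`, then we can exhibit a set of schedule-steps, all
"serving `v`", whose truncated time-increments total at least `2cT - 3d1`. -/
private lemma perv {n : ℕ} (visits : ℕ → Fin n) (τ : ℕ → ℝ) (mono : Monotone τ) (τ0 : τ 0 = 0)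
    (d1 c T : ℝ) (hd1 : 0 < d1) (hc0 : 0 < c) (hc2 : 2 * c ≤ 1)
    (hT : 2 * (d1 / (2 * c)) ≤ T)
    (v : Fin n)
    (hmoved : ∀ k, visits k ≠ visits (k + 1) → τ k + d1 ≤ τ (k + 1))
    (hA : ∀ t : ℝ, d1 / (2 * c) ≤ t → ∃ j, visits j = v ∧ t - d1 / (2 * c) < τ j ∧ τ j ≤ t)
    (hNE : ∀ N : ℕ, ∃ j, N ≤ j ∧ visits j ≠ v) :
    ∃ F : Finset ℕ, (∀ k ∈ F, visits (k + 1) = v) ∧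
      2 * c * T - 3 * d1 ≤ ∑ k ∈ F, (min (τ (k + 1)) T - min (τ k) T) := by
  classical
  set L : ℝ := d1 / (2 * c) with hLdef
  have hL0 : 0 < L := by positivity
  have hd1L : d1 = 2 * c * L := by rw [hLdef]; field_simp
  have τnn : ∀ k, 0 ≤ τ k := fun k => τ0 ▸ mono (Nat.zero_le k)
  have hTnn : 0 ≤ T := le_trans (by positivity) hT
  have hAL : ∀ x : ℝ, 0 ≤ x → ∃ j, visits j = v ∧ x < τ j ∧ τ j ≤ x + L := by
    intro x hx
    obtain ⟨j, h1, h2, h3⟩ := hA (x + L) (by linarith)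
    exact ⟨j, h1, by linarith, h3⟩
  -- the departure index after jj
  have hEex : ∀ jj : ℕ, ∃ m, jj < m ∧ visits m ≠ v ∧ ∀ m', m' < m → jj < m' → visits m' = v := by
    intro jj
    have hex : ∃ m, jj < m ∧ visits m ≠ v := by
      obtain ⟨m, hm1, hm2⟩ := hNE (jj + 1)
      exact ⟨m, hm1, hm2⟩
    refine ⟨Nat.find hex, (Nat.find_spec hex).1, (Nat.find_spec hex).2, ?_⟩
    intro m' h1 h2
    by_contra hmv
    exact Nat.find_min hex h1 ⟨h2, hmv⟩
  choose E hE1 hE2 hE3 using hEex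
  -- the recursively chosen visit indices
  obtain ⟨j0, hj0v, hj0pos, hj0le⟩ := hAL 0 le_rfl
  choose next hnext1 hnext2 hnext3 using (fun jj : ℕ => hAL (τ (E jj - 1)) (τnn _))
  set J : ℕ → ℕ := fun p => Nat.rec j0 (fun _ prev => next prev) p with hJdef
  have hJrec : ∀ p, J (p + 1) = next (J p) := fun p => rfl
  have hJ0eq : J 0 = j0 := rfl
  have hJv : ∀ p, visits (J p) = v := by
    intro p
    cases p with
    | zero => exact hj0v
    | succ p => rw [hJrec]; exact hnext1 (J p)
  have hJs1 : ∀ p, τ (E (J p) - 1) < τ (J (p + 1)) := fun p => by rw [hJrec]; exact hnext2 (J p)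
  have hJs2 : ∀ p, τ (J (p + 1)) ≤ τ (E (J p) - 1) + L := fun p => by
    rw [hJrec]; exact hnext3 (J p)
  have hJE : ∀ p, J p ≤ E (J p) - 1 := fun p => by have := hE1 (J p); omega
  have run_v : ∀ p m, J p ≤ m → m < E (J p) → visits m = v := by
    intro p m h1 h2
    rcases eq_or_lt_of_le h1 with heq | hlt
    · rw [← heq]; exact hJv p
    · exact hE3 (J p) m h2 hlt
  have hJlt : ∀ p, E (J p) < J (p + 1) := by
    intro p
    have h1 : E (J p) ≤ J (p + 1) := by
      by_contra hcon2
      push_neg at hcon2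
      have : τ (J (p + 1)) ≤ τ (E (J p) - 1) := mono (by omega)
      exact absurd (hJs1 p) (not_lt.2 this)
    rcases eq_or_lt_of_le h1 with heq | hlt
    · exact absurd (heq ▸ hJv (p + 1)) (hE2 (J p))
    · exact hlt
  have hJmono : ∀ p q, p < q → J p < J q := by
    intro p q hpq
    have : ∀ r, J p < J (p + 1 + r) := by
      intro r
      induction r with
      | zero => exact lt_trans (hE1 (J p)) (hJlt p)
      | succ r ih => exact lt_trans ih (lt_trans (hE1 _) (hJlt (p + 1 + r)))
    have := this (q - (p + 1))
    rwa [show p + 1 + (q - (p + 1)) = q from by omega] at this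
  have hstep : ∀ p, τ (E (J p) - 1) + d1 ≤ τ (E (J p)) := by
    intro p
    have hEpos : J p < E (J p) := hE1 (J p)
    have hv1 : visits (E (J p) - 1) = v := run_v p _ (hJE p) (by omega)
    have hne : visits (E (J p) - 1) ≠ visits (E (J p) - 1 + 1) := by
      rw [hv1, show E (J p) - 1 + 1 = E (J p) from by omega]
      exact fun hh => hE2 (J p) hh.symm
    have h2 := hmoved _ hne
    rwa [show E (J p) - 1 + 1 = E (J p) from by omega] at h2
  have hτJd1 : ∀ p, τ (J p) + d1 ≤ τ (J (p + 1)) := by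
    intro p
    have h1 : τ (J p) ≤ τ (E (J p) - 1) := mono (hJE p)
    have h2 := hstep p
    have h3 : τ (E (J p)) ≤ τ (J (p + 1)) := mono (le_of_lt (hJlt p))
    linarith
  have hτlb : ∀ p : ℕ, (p : ℝ) * d1 ≤ τ (J p) := by
    intro p
    induction p with
    | zero => simpa using τnn (J 0)
    | succ p ih =>
      have := hτJd1 p
      push_cast
      linarith
  have hchain : ∀ p, τ (J p) ≤ ((p : ℝ) + 1) * L +
      ∑ q ∈ Finset.range p, (τ (E (J q) - 1) - τ (J q)) := by
    intro p
    induction p with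
    | zero => rw [hJ0eq]; simpa using hj0le
    | succ p ih =>
      rw [Finset.sum_range_succ]
      have h2 := hJs2 p
      push_cast
      push_cast at ih
      linarith
  -- the stopping index
  have hPex : ∃ p, T - 2 * L < τ (E (J p) - 1) := by
    obtain ⟨p, hp⟩ := exists_nat_gt (T / d1)
    refine ⟨p, ?_⟩
    have h1 : T < (p : ℝ) * d1 := by
      rw [div_lt_iff₀ hd1] at hp
      linarith
    have h2 := hτlb p
    have h3 : τ (J p) ≤ τ (E (J p) - 1) := mono (hJE p)
    linarith
  obtain ⟨P, hPspec, hPmin⟩ : ∃ P : ℕ, (T - 2 * L < τ (E (J P) - 1)) ∧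
      ∀ p, p < P → τ (E (J p) - 1) ≤ T - 2 * L :=
    ⟨Nat.find hPex, Nat.find_spec hPex, fun p hp => not_lt.1 (Nat.find_min hPex hp)⟩
  have hτJPle : τ (J P) ≤ T := by
    rcases Nat.eq_zero_or_pos P with h0 | hpos
    · rw [h0, hJ0eq]; linarith
    · obtain ⟨p, hp⟩ : ∃ p, P = p + 1 := ⟨P - 1, by omega⟩
      have h1 := hJs2 p
      have h2 := hPmin p (by omega)
      rw [hp]
      linarith
  -- arrival steps
  set K : ℕ → ℕ := fun p => Nat.findGreatest (fun k => visits k ≠ v) (J (p + 1) - 1) with hKdef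
  have hKlb : ∀ p, E (J p) ≤ K p := by
    intro p
    simp only [hKdef]
    refine Nat.le_findGreatest ?_ (hE2 (J p))
    have := hJlt p
    omega
  have hKub : ∀ p, K p ≤ J (p + 1) - 1 := by
    intro p
    simp only [hKdef]
    exact Nat.findGreatest_le _
  have hKne : ∀ p, visits (K p) ≠ v := by
    intro p
    simp only [hKdef]
    refine Nat.findGreatest_spec (P := fun k => visits k ≠ v) (m := E (J p)) ?_ (hE2 (J p))
    have := hJlt p
    omega
  have hJp1pos : ∀ p, 1 ≤ J (p + 1) := fun p => by have := hJmono p (p + 1) (by omega); omega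
  have hKsucc : ∀ p, visits (K p + 1) = v := by
    intro p
    have hub := hKub p
    have hpos := hJp1pos p
    rcases eq_or_lt_of_le (show K p + 1 ≤ J (p + 1) from by omega) with heq | hlt2
    · rw [heq]; exact hJv (p + 1)
    · by_contra hne
      have hgr : Nat.findGreatest (fun k => visits k ≠ v) (J (p + 1) - 1) < K p + 1 := by
        simp only [hKdef]
        omega
      exact Nat.findGreatest_is_greatest hgr (by omega) hne
  have hKT : ∀ p, p < P → τ (K p + 1) ≤ T := by
    intro p hp
    have h1 : K p + 1 ≤ J (p + 1) := by have := hKub p; have := hJp1pos p; omega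
    have h2 : τ (K p + 1) ≤ τ (J (p + 1)) := mono h1
    have h3 := hJs2 p
    have h4 := hPmin p hp
    linarith
  have hKd1 : ∀ p, d1 ≤ τ (K p + 1) - τ (K p) := by
    intro p
    have := hmoved (K p) (by rw [hKsucc p]; exact hKne p)
    linarith
  -- the step sets
  set g : ℕ → ℝ := fun k => min (τ (k + 1)) T - min (τ k) T with hgdef
  have hg0 : ∀ k, 0 ≤ g k := by
    intro k
    have : min (τ k) T ≤ min (τ (k + 1)) T := min_le_min (mono (Nat.le_succ k)) le_rfl
    simp only [hgdef]
    linarith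
  set A : Finset ℕ := (Finset.range P).image K with hAdef
  set B : Finset ℕ := (Finset.range (P + 1)).biUnion
    (fun p => Finset.Ico (J p) (E (J p) - 1)) with hBdef
  have hBv : ∀ k ∈ B, visits k = v ∧ visits (k + 1) = v := by
    intro k hk
    simp only [hBdef, Finset.mem_biUnion, Finset.mem_range, Finset.mem_Ico] at hk
    obtain ⟨p, _, hk1, hk2⟩ := hk
    have := hE1 (J p)
    exact ⟨run_v p k hk1 (by omega), run_v p (k + 1) (by omega) (by omega)⟩
  have hAv : ∀ k ∈ A, visits k ≠ v ∧ visits (k + 1) = v := by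
    intro k hk
    simp only [hAdef, Finset.mem_image, Finset.mem_range] at hk
    obtain ⟨p, _, rfl⟩ := hk
    exact ⟨hKne p, hKsucc p⟩
  have hABdisj : Disjoint A B :=
    Finset.disjoint_left.2 fun k hkA hkB => (hAv k hkA).1 (hBv k hkB).1
  have hKmono : ∀ p q, p < q → K p < K q := by
    intro p q hpq
    have h1 : K p ≤ J (p + 1) - 1 := hKub p
    have h2 : J (p + 1) ≤ J q ∨ p + 1 = q := by
      rcases eq_or_lt_of_le (show p + 1 ≤ q from hpq) with heq | hlt
      · exact Or.inr heq
      · exact Or.inl (le_of_lt (hJmono (p + 1) q hlt))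
    have h3 : J q < E (J q) := hE1 (J q)
    have h4 : E (J q) ≤ K q := hKlb q
    have h5 := hJp1pos p
    rcases h2 with h2 | h2
    · omega
    · subst h2; omega
  have hAsum : (P : ℝ) * d1 ≤ ∑ k ∈ A, g k := by
    rw [hAdef, Finset.sum_image (by
      intro p hp q hq hpq
      by_contra hne
      rcases Nat.lt_or_ge p q with hlt | hge
      · exact absurd hpq (ne_of_lt (hKmono p q hlt))
      · exact absurd hpq.symm (ne_of_lt (hKmono q p (by omega))))]
    calc (P : ℝ) * d1 = ∑ _p ∈ Finset.range P, d1 := by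
          rw [Finset.sum_const, Finset.card_range, nsmul_eq_mul]
      _ ≤ ∑ p ∈ Finset.range P, g (K p) := by
          apply Finset.sum_le_sum
          intro p hp
          have hp' := Finset.mem_range.1 hp
          have h1 := hKT p hp'
          have h2 : τ (K p) ≤ T := le_trans (mono (Nat.le_succ _)) h1
          simp only [hgdef]
          rw [min_eq_left h1, min_eq_left h2]
          exact hKd1 p
  have hBpair : Set.PairwiseDisjoint ↑(Finset.range (P + 1))
      (fun p => Finset.Ico (J p) (E (J p) - 1)) := by
    intro p _ q _ hpq
    have key : ∀ a b : ℕ, a < b →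
        Disjoint (Finset.Ico (J a) (E (J a) - 1)) (Finset.Ico (J b) (E (J b) - 1)) := by
      intro a b hab
      apply Finset.disjoint_left.2
      intro k hk1 hk2
      simp only [Finset.mem_Ico] at hk1 hk2
      have h1 : E (J a) < J (a + 1) := hJlt a
      have h2 : J (a + 1) ≤ J b := by
        rcases eq_or_lt_of_le (show a + 1 ≤ b from hab) with heq | hlt
        · rw [heq]
        · exact le_of_lt (hJmono (a + 1) b hlt)
      omega
    rcases Nat.lt_or_ge p q with hlt | hge
    · exact key p q hlt
    · exact (key q p (by omega)).symm
  have hBsum : ∑ k ∈ B, g k = ∑ p ∈ Finset.range (P + 1),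
      (min (τ (E (J p) - 1)) T - min (τ (J p)) T) := by
    rw [hBdef, Finset.sum_biUnion hBpair]
    apply Finset.sum_congr rfl
    intro p _
    exact tele_sum (fun k => min (τ k) T) (J p) (E (J p) - 1) (hJE p)
  -- lower bounds for the B-sum
  set Ssum : ℝ := ∑ p ∈ Finset.range P, (τ (E (J p) - 1) - τ (J p)) with hSdef
  have hSnn : 0 ≤ Ssum := by
    apply Finset.sum_nonneg
    intro p _
    have := mono (hJE p)
    linarith
  set termP : ℝ := min (τ (E (J P) - 1)) T - min (τ (J P)) T with htermPdef
  have htermPnn : 0 ≤ termP := by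
    have : min (τ (J P)) T ≤ min (τ (E (J P) - 1)) T := min_le_min (mono (hJE P)) le_rfl
    simp only [htermPdef]
    linarith
  have htermPlb : T - 2 * L - τ (J P) ≤ termP := by
    have h1 : T - 2 * L ≤ min (τ (E (J P) - 1)) T := le_min (le_of_lt hPspec) (by linarith)
    have h2 : min (τ (J P)) T = τ (J P) := min_eq_left hτJPle
    simp only [htermPdef]
    linarith
  have hBsum' : Ssum + termP ≤ ∑ k ∈ B, g k := by
    rw [hBsum, Finset.sum_range_succ]
    have : ∑ p ∈ Finset.range P, (min (τ (E (J p) - 1)) T - min (τ (J p)) T) = Ssum := by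
      apply Finset.sum_congr rfl
      intro p hp
      have hp' := Finset.mem_range.1 hp
      have h1 : τ (E (J p) - 1) ≤ T := le_trans (hPmin p hp') (by linarith)
      have h2 : τ (J p) ≤ T := le_trans (mono (hJE p)) h1
      rw [min_eq_left h1, min_eq_left h2]
    rw [this]
  -- assemble
  refine ⟨A ∪ B, ?_, ?_⟩
  · intro k hk
    rcases Finset.mem_union.1 hk with hk | hk
    · exact (hAv k hk).2
    · exact (hBv k hk).2
  · rw [Finset.sum_union hABdisj]
    have hchainP := hchain P
    have hPL : T - 3 * L - (Ssum + termP) ≤ (P : ℝ) * L := by linarith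
    have h2c : (0 : ℝ) ≤ 2 * c := by linarith
    have h1 := mul_le_mul_of_nonneg_left hPL h2c
    have h2 : 2 * c * ((P : ℝ) * L) = (P : ℝ) * d1 := by rw [hd1L]; ring
    have h3 : 2 * c * (T - 3 * L - (Ssum + termP)) =
        2 * c * T - 3 * d1 - 2 * c * (Ssum + termP) := by rw [hd1L]; ring
    have h4 : 2 * c * (Ssum + termP) ≤ 1 * (Ssum + termP) :=
      mul_le_mul_of_nonneg_right hc2 (by linarith)
    have h5 : 2 * c * T - 3 * d1 ≤ (P : ℝ) * d1 + (Ssum + termP) := by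
      rw [h2, h3] at h1
      linarith
    linarith [hAsum, hBsum']

set_option maxHeartbeats 1000000 in
/-- The spiral instance `V*`: `n = 2^{3s}` points (so `s = (log₂ n)/3`), any two distinct
points at distance at least `d₁ = n^{-2/3}`, pairwise disjoint groups `G_1, …, G_s` with
`|G_i| = n/2^i`, every point of `G_i` having growth rate `(3-ε)·2^i/(n·log₂ n)`, and all
growth rates summing to at most `1`.  Then every schedule lets some bamboo of some group
`G_i` grow to height at least `d₁/2`. -/
theorem spiral_instance_lower_bound (n s : ℕ) (hs : 1 ≤ s) (hn : n = 2 ^ (3 * s))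
    (ε : ℝ) (hε0 : 0 < ε) (hε1 : ε < 1)
    (d : Fin n → Fin n → ℝ)
    (dnonneg : ∀ i j, 0 ≤ d i j) (dself : ∀ i, d i i = 0)
    (dsymm : ∀ i j, d i j = d j i) (dtri : ∀ i j k, d i k ≤ d i j + d j k)
    (hd1 : ∀ i j : Fin n, i ≠ j → ((n : ℝ) ^ (-(2 : ℝ) / 3)) ≤ d i j)
    (h : Fin n → ℝ) (hnonneg : ∀ v, 0 ≤ h v)
    (G : ℕ → Finset (Fin n))
    (hdisj : ∀ i j, i ≠ j → Disjoint (G i) (G j))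
    (hcard : ∀ i, 1 ≤ i → i ≤ s → (G i).card * 2 ^ i = n)
    (hrate : ∀ i, 1 ≤ i → i ≤ s → ∀ v ∈ G i,
      h v = (3 - ε) * 2 ^ i / ((n : ℝ) * Real.logb 2 n))
    (hsum : ∑ v, h v ≤ 1)
    (visits : ℕ → Fin n) (τ : ℕ → ℝ) (hτ0 : τ 0 = 0)
    (hmove : ∀ k, τ k + d (visits k) (visits (k + 1)) ≤ τ (k + 1)) :
    ∃ i, 1 ≤ i ∧ i ≤ s ∧ ∃ v ∈ G i, ∃ t : ℝ, 0 ≤ t ∧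
      ((n : ℝ) ^ (-(2 : ℝ) / 3)) / 2 ≤ contHeight h τ visits v t := by
  classical
  by_contra hcon
  push_neg at hcon
  set d1 : ℝ := (n : ℝ) ^ (-(2 : ℝ) / 3) with hd1def
  have hn8 : 8 ≤ n := by
    rw [hn]
    calc 8 = 2 ^ (3 * 1) := by norm_num
      _ ≤ 2 ^ (3 * s) := Nat.pow_le_pow_right (by norm_num) (by omega)
  have hn0 : (0 : ℝ) < n := by
    have : (8 : ℝ) ≤ n := by exact_mod_cast hn8
    linarith
  have hs1 : (1 : ℝ) ≤ s := by exact_mod_cast hs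
  have hd1pos : 0 < d1 := Real.rpow_pos_of_pos hn0 _
  have mono : Monotone τ :=
    monotone_nat_of_le_succ (fun k => le_trans (le_add_of_nonneg_right (dnonneg _ _)) (hmove k))
  have τnn : ∀ k, 0 ≤ τ k := fun k => hτ0 ▸ mono (Nat.zero_le k)
  have hcast : (n : ℝ) = (2 : ℝ) ^ (3 * s) := by rw [hn]; push_cast; ring
  have hlog : Real.logb 2 (n : ℝ) = 3 * (s : ℝ) := by
    rw [hcast, Real.logb_pow, Real.logb_self_eq_one (by norm_num)]
    push_cast
    ring
  have hrate' : ∀ i, 1 ≤ i → i ≤ s → ∀ v ∈ G i,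
      h v = (3 - ε) * 2 ^ i / ((n : ℝ) * (3 * s)) := by
    intro i hi1 hi2 v hv
    rw [hrate i hi1 hi2 v hv, hlog]
  have hmoved : ∀ k, visits k ≠ visits (k + 1) → τ k + d1 ≤ τ (k + 1) := by
    intro k hk
    have := hd1 _ _ hk
    have := hmove k
    linarith
  -- basic bounds on the rates
  have hratebounds : ∀ i, 1 ≤ i → i ≤ s → ∀ v ∈ G i,
      0 < h v ∧ 2 * h v ≤ 1 ∧ 4 / ((n : ℝ) * (3 * s)) ≤ h v := by
    intro i hi1 hi2 v hv
    have hden : (0 : ℝ) < (n : ℝ) * (3 * s) := by positivity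
    have h2i : (2 : ℝ) ^ i ≤ 2 ^ s := pow_le_pow_right₀ one_le_two hi2
    have h2inn : (0 : ℝ) ≤ 2 ^ i := by positivity
    have h2i1 : (2 : ℝ) ≤ 2 ^ i := by
      calc (2 : ℝ) = 2 ^ 1 := by norm_num
        _ ≤ 2 ^ i := pow_le_pow_right₀ one_le_two hi1
    have h2spos : (0 : ℝ) < 2 ^ s := by positivity
    have hnlb : (4 : ℝ) * 2 ^ s ≤ n := by
      rw [hcast, show 3 * s = s + 2 * s from by ring, pow_add, pow_mul]
      have h4s : (4 : ℝ) ≤ ((2 : ℝ) ^ 2) ^ s := by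
        calc (4 : ℝ) = ((2 : ℝ) ^ 2) ^ 1 := by norm_num
          _ ≤ ((2 : ℝ) ^ 2) ^ s := pow_le_pow_right₀ (by norm_num) hs
      nlinarith
    have hnum : (3 - ε) * 2 ^ i ≤ 3 * 2 ^ s := by nlinarith
    have hden2 : (12 : ℝ) * 2 ^ s ≤ (n : ℝ) * (3 * s) := by nlinarith
    have hnum4 : (4 : ℝ) ≤ (3 - ε) * 2 ^ i := by nlinarith
    rw [hrate' i hi1 hi2 v hv]
    refine ⟨by positivity, ?_, ?_⟩
    · rw [show 2 * ((3 - ε) * 2 ^ i / ((n : ℝ) * (3 * s))) =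
        (2 * ((3 - ε) * 2 ^ i)) / ((n : ℝ) * (3 * s)) from by ring, div_le_one hden]
      linarith
    · rw [div_le_div_iff₀ hden hden]
      nlinarith
  -- dichotomy: either the robot eventually parks at a single point, or not
  by_cases hstuck : ∃ u : Fin n, ∃ N : ℕ, ∀ j, N ≤ j → visits j = u
  · -- robot parks at u forever: some other bamboo in G 1 grows unboundedly
    obtain ⟨u, N, hu⟩ := hstuck
    have hG1card : 1 < (G 1).card := by
      have := hcard 1 le_rfl hs
      simp only [pow_one] at this
      omega
    obtain ⟨w, hw, hwu⟩ := Finset.exists_mem_ne hG1card u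
    obtain ⟨hw0, hw2, hw4⟩ := hratebounds 1 le_rfl hs w hw
    set t : ℝ := τ N + d1 / (2 * h w) with htdef
    have ht0 : 0 ≤ t := by
      have h1 := τnn N
      have h2 : (0 : ℝ) < d1 / (2 * h w) := by positivity
      simp only [htdef]
      linarith
    have hlast : lastVisit τ visits w t ≤ τ N := by
      simp only [lastVisit]
      apply Real.sSup_le ?_ (τnn N)
      rintro x ⟨j, hj1, hj2, hj3⟩
      have hjN : j < N := by
        by_contra hge
        push_neg at hge
        exact hwu (by rw [← hj1]; exact hu j hge)
      rw [← hj2]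
      exact mono (le_of_lt hjN)
    have hch := hcon 1 le_rfl hs w hw t ht0
    simp only [contHeight] at hch
    have hgap : d1 / (2 * h w) ≤ t - lastVisit τ visits w t := by
      simp only [htdef]
      linarith
    have hge2 : d1 / 2 ≤ h w * (t - lastVisit τ visits w t) := by
      have h1 : h w * (d1 / (2 * h w)) ≤ h w * (t - lastVisit τ visits w t) :=
        mul_le_mul_of_nonneg_left hgap (le_of_lt hw0)
      have h2 : h w * (d1 / (2 * h w)) = d1 / 2 := by
        field_simp
      linarith
    linarith
  · -- main case
    push_neg at hstuck
    set T : ℝ := 9 * d1 * n + s * n * d1 + 1 with hTdef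
    have hTnn : (0 : ℝ) ≤ T := by
      have h1 : (0 : ℝ) ≤ 9 * d1 * n := by positivity
      have h2 : (0 : ℝ) ≤ (s : ℝ) * n * d1 := by positivity
      simp only [hTdef]
      linarith
    set GG : Finset (Fin n) := (Finset.Icc 1 s).biUnion G with hGGdef
    have hkey : ∀ v : Fin n, ∃ F : Finset ℕ, (∀ k ∈ F, visits (k + 1) = v) ∧
        (v ∈ GG → 2 * h v * T - 3 * d1 ≤ ∑ k ∈ F, (min (τ (k + 1)) T - min (τ k) T)) := by
      intro v
      by_cases hv : v ∈ GG
      · have hv' := hv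
        simp only [hGGdef, Finset.mem_biUnion, Finset.mem_Icc] at hv'
        obtain ⟨i, ⟨hi1, hi2⟩, hvi⟩ := hv'
        obtain ⟨hv0, hv2, hv4⟩ := hratebounds i hi1 hi2 v hvi
        have hden : (0 : ℝ) < (n : ℝ) * (3 * s) := by positivity
        have hTv : 2 * (d1 / (2 * h v)) ≤ T := by
          rw [show 2 * (d1 / (2 * h v)) = d1 / h v from by field_simp, div_le_iff₀ hv0]
          have h1 : d1 * ((n : ℝ) * (3 * s)) / 4 * (4 / ((n : ℝ) * (3 * s))) ≤
              d1 * ((n : ℝ) * (3 * s)) / 4 * h v :=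
            mul_le_mul_of_nonneg_left hv4 (by positivity)
          have h2 : d1 * ((n : ℝ) * (3 * s)) / 4 * (4 / ((n : ℝ) * (3 * s))) = d1 := by
            field_simp
          have h3 : d1 * ((n : ℝ) * (3 * s)) / 4 * h v ≤ T * h v := by
            apply mul_le_mul_of_nonneg_right ?_ (le_of_lt hv0)
            have h4 : d1 * ((n : ℝ) * (3 * s)) / 4 ≤ (s : ℝ) * n * d1 := by nlinarith
            have h5 : (0 : ℝ) ≤ 9 * d1 * n := by positivity
            simp only [hTdef]
            linarith
          exact le_of_eq_of_le h2.symm (h1.trans h3)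
        have hA : ∀ t : ℝ, d1 / (2 * h v) ≤ t →
            ∃ j, visits j = v ∧ t - d1 / (2 * h v) < τ j ∧ τ j ≤ t := by
          intro t ht
          have hLpos : (0 : ℝ) < d1 / (2 * h v) := by positivity
          have ht0 : 0 ≤ t := le_trans (le_of_lt hLpos) ht
          have hch := hcon i hi1 hi2 v hvi t ht0
          simp only [contHeight] at hch
          set Sv : Set ℝ := {x : ℝ | ∃ j : ℕ, visits j = v ∧ τ j = x ∧ x ≤ t} with hSvdef
          have hlv : lastVisit τ visits v t = sSup Sv := rfl
          have hbdd : BddAbove Sv := ⟨t, by rintro x ⟨j, _, _, hx⟩; exact hx⟩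
          have hne : Sv.Nonempty := by
            by_contra hemp
            rw [Set.not_nonempty_iff_eq_empty] at hemp
            rw [hlv, hemp, Real.sSup_empty] at hch
            rw [div_le_iff₀ (by positivity : (0 : ℝ) < 2 * h v)] at ht
            nlinarith
          have hlt : t - d1 / (2 * h v) < lastVisit τ visits v t := by
            have hub : t - lastVisit τ visits v t < d1 / (2 * h v) := by
              rw [lt_div_iff₀ (by positivity : (0 : ℝ) < 2 * h v)]
              nlinarith
            linarith
          rw [hlv] at hlt
          obtain ⟨x, hx, hxgt⟩ := (lt_csSup_iff hbdd hne).1 hlt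
          obtain ⟨j, hj1, hj2, hj3⟩ := hx
          exact ⟨j, hj1, hj2 ▸ hxgt, hj2 ▸ hj3⟩
        obtain ⟨F, hF1, hF2⟩ := perv visits τ mono hτ0 d1 (h v) T hd1pos hv0 hv2 hTv v
          hmoved hA (hstuck v)
        exact ⟨F, hF1, fun _ => hF2⟩
      · exact ⟨∅, by simp, fun hmem => absurd hmem hv⟩
    choose F hF1 hF2 using hkey
    have hFdisj : Set.PairwiseDisjoint ↑GG F := by
      intro a _ b _ hab
      apply Finset.disjoint_left.2
      intro k hka hkb
      exact hab (by rw [← hF1 a k hka, hF1 b k hkb])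
    set g : ℕ → ℝ := fun k => min (τ (k + 1)) T - min (τ k) T with hgdef
    have hg0 : ∀ k, 0 ≤ g k := by
      intro k
      have : min (τ k) T ≤ min (τ (k + 1)) T := min_le_min (mono (Nat.le_succ k)) le_rfl
      simp only [hgdef]
      linarith
    have hup : ∑ v ∈ GG, ∑ k ∈ F v, g k ≤ T := by
      rw [← Finset.sum_biUnion hFdisj]
      set N0 : ℕ := (GG.biUnion F).sup id + 1 with hN0def
      have hsub : GG.biUnion F ⊆ Finset.range N0 := by
        intro k hk
        have := Finset.le_sup (f := id) hk
        simp only [id] at this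
        exact Finset.mem_range.2 (by omega)
      have h1 : ∑ k ∈ GG.biUnion F, g k ≤ ∑ k ∈ Finset.range N0, g k :=
        Finset.sum_le_sum_of_subset_of_nonneg hsub (fun k _ _ => hg0 k)
      have h2 : ∑ k ∈ Finset.range N0, g k = min (τ N0) T - min (τ 0) T :=
        Finset.sum_range_sub (fun k => min (τ k) T) N0
      have h3 : min (τ 0) T = 0 := by rw [hτ0]; exact min_eq_left hTnn
      have h4 : min (τ N0) T ≤ T := min_le_right _ _
      linarith
    have hGsum : ∑ v ∈ GG, h v = (3 - ε) / 3 := by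
      rw [hGGdef, Finset.sum_biUnion (fun a _ b _ hab => hdisj a b hab)]
      have hinner : ∀ i ∈ Finset.Icc 1 s, ∑ v ∈ G i, h v = (3 - ε) / (3 * s) := by
        intro i hi
        obtain ⟨hi1, hi2⟩ := Finset.mem_Icc.1 hi
        rw [Finset.sum_congr rfl (fun v hv => hrate' i hi1 hi2 v hv), Finset.sum_const,
          nsmul_eq_mul]
        have hcardr : ((G i).card : ℝ) * 2 ^ i = n := by
          exact_mod_cast congrArg (Nat.cast : ℕ → ℝ) (hcard i hi1 hi2)
        rw [show ((G i).card : ℝ) * ((3 - ε) * 2 ^ i / ((n : ℝ) * (3 * s))) =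
          (3 - ε) * (((G i).card : ℝ) * 2 ^ i) / ((n : ℝ) * (3 * s)) from by ring, hcardr]
        have hn0' : (n : ℝ) ≠ 0 := ne_of_gt hn0
        have hs0' : (s : ℝ) ≠ 0 := by positivity
        field_simp
      rw [Finset.sum_congr rfl hinner, Finset.sum_const, Nat.card_Icc, nsmul_eq_mul]
      rw [show s + 1 - 1 = s from by omega]
      have hs0' : (s : ℝ) ≠ 0 := by positivity
      field_simp
    have hlow : ∑ v ∈ GG, (2 * h v * T - 3 * d1) ≤ ∑ v ∈ GG, ∑ k ∈ F v, g k :=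
      Finset.sum_le_sum (fun v hv => hF2 v hv)
    have hlow2 : ∑ v ∈ GG, (2 * h v * T - 3 * d1) =
        2 * T * ((3 - ε) / 3) - 3 * d1 * GG.card := by
      rw [Finset.sum_sub_distrib, Finset.sum_const, nsmul_eq_mul]
      have hmul : ∑ v ∈ GG, 2 * h v * T = 2 * T * ∑ v ∈ GG, h v := by
        rw [Finset.mul_sum]
        exact Finset.sum_congr rfl (fun v _ => by ring)
      rw [hmul, hGsum]
      ring
    have hcardle : (GG.card : ℝ) ≤ n := by
      have h1 : GG.card ≤ n := le_trans (Finset.card_le_univ GG) (le_of_eq (Fintype.card_fin n))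
      exact_mod_cast h1
    have hfin : 2 * T * ((3 - ε) / 3) - 3 * d1 * n ≤ T := by
      have h1 : 3 * d1 * (GG.card : ℝ) ≤ 3 * d1 * n := by nlinarith
      linarith
    have hTε : 0 ≤ T * (1 - ε) := mul_nonneg hTnn (by linarith)
    have hposd : 0 < (s : ℝ) * n * d1 := by positivity
    nlinarith [hfin, hTε, hposd, hTnn]
end
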